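/- arXiv:1109.6453 — 3 statements merged into one kernel-verified Lean document; each statement's English description precedes it below -/
import Mathlib

section
/- Let (X_t)_{t∈ℤ⁺} be adapted to (F_t), X_0 = 0, with increments Δ_t. Fix α ∈ (0,1], β > 0, and suppose there exists C < ∞ with E[(Δ_t⁺)^α | F_t] ≤ C a.s. for all t, and that E[(Δ_t⁻)^β | F_t] = ∞ a.s. for all t. Then for any x > 0, the first passage time τ_x = min{t : X_t ≥ x} satisfies E[τ_x^{β/α}] = ∞. -/
open MeasureTheory Filter ENNReal

lemma rpow_add_le_add_rpow' (a b : ℝ) (ha : 0 ≤ a) (hb : 0 ≤ b) {p : ℝ}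
    (hp : 0 ≤ p) (hp1 : p ≤ 1) : (a + b) ^ p ≤ a ^ p + b ^ p := by
  have h := NNReal.rpow_add_le_add_rpow a.toNNReal b.toNNReal hp hp1
  rw [← Real.toNNReal_add ha hb] at h
  have h2 := NNReal.coe_le_coe.mpr h
  rwa [NNReal.coe_rpow, NNReal.coe_add, NNReal.coe_rpow, NNReal.coe_rpow,
    Real.coe_toNNReal _ (by positivity), Real.coe_toNNReal _ ha, Real.coe_toNNReal _ hb] at h2

lemma sum_rpow_le' {ι : Type*} (s : Finset ι) (f : ι → ℝ) (hf : ∀ i ∈ s, 0 ≤ f i) {p : ℝ}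
    (hp : 0 < p) (hp1 : p ≤ 1) : (∑ i ∈ s, f i) ^ p ≤ ∑ i ∈ s, f i ^ p := by
  classical
  induction s using Finset.induction_on with
  | empty => simp [Real.zero_rpow hp.ne']
  | insert a t hnotmem ih =>
    rw [Finset.sum_insert hnotmem, Finset.sum_insert hnotmem]
    have hft : 0 ≤ ∑ i ∈ t, f i := Finset.sum_nonneg fun i hi => hf i (Finset.mem_insert_of_mem hi)
    calc (f a + ∑ i ∈ t, f i) ^ p ≤ f a ^ p + (∑ i ∈ t, f i) ^ p :=
          rpow_add_le_add_rpow' _ _ (hf a (Finset.mem_insert_self a t)) hft hp.le hp1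
      _ ≤ f a ^ p + ∑ i ∈ t, f i ^ p := by
          gcongr
          exact ih fun i hi => hf i (Finset.mem_insert_of_mem hi)

/-- Theorem 6 of the paper: non-existence of the `β/α` moment of the first
passage time `τ_x` when `E[(Δ_t⁺)^α|F_t] ≤ C` and `E[(Δ_t⁻)^β|F_t] = ∞` a.s.
The condition `E[(Δ_t⁻)^β|F_t] = ∞ a.s.` is expressed by saying that the
integral of `(Δ_t⁻)^β` over every `F_t`-measurable set of positive measure is
infinite. -/
theorem stmt16
    {Ω : Type*} {m0 : MeasurableSpace Ω} {μ : Measure Ω} [IsProbabilityMeasure μ]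
    (F : Filtration ℕ m0) (X : ℕ → Ω → ℝ) (hadapted : Adapted F X)
    (hX0 : ∀ ω, X 0 ω = 0)
    (α β C : ℝ) (hα : α ∈ Set.Ioc (0:ℝ) 1) (hβ : 0 < β)
    (hposint : ∀ t, Integrable (fun ω => (max (X (t + 1) ω - X t ω) 0) ^ α) μ)
    (hpos : ∀ t, ∀ᵐ ω ∂μ,
      (μ[fun ω' => (max (X (t + 1) ω' - X t ω') 0) ^ α|F t]) ω ≤ C)
    (hneg : ∀ t, ∀ A : Set Ω, MeasurableSet[F t] A → 0 < μ A →
      ∫⁻ ω in A, ENNReal.ofReal ((max (-(X (t + 1) ω - X t ω)) 0) ^ β) ∂μ = ⊤)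
    (x : ℝ) (hx : 0 < x) :
    ∫⁻ ω, (⨅ (t : ℕ) (_ : x ≤ X t ω), (t : ℝ≥0∞)) ^ (β / α) ∂μ = ⊤ := by
  obtain ⟨hα1, hα2⟩ := hα
  -- basic objects
  set D : ℕ → Ω → ℝ := fun t ω => max (X (t + 1) ω - X t ω) 0 with hD
  set N : Ω → ℝ := fun ω => max (-(X 1 ω - X 0 ω)) 0 with hNdef
  set C' : ℝ := max C 1 with hC'def
  have hC' : (0:ℝ) < C' := lt_of_lt_of_le one_pos (le_max_right _ _)
  have hCC' : C ≤ C' := le_max_left _ _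
  -- measurability
  have hXm : ∀ t, Measurable (X t) := fun t =>
    ((hadapted t).mono (F.le t) le_rfl)
  have hpowm : ∀ u : ℕ, Measurable fun ω => (max (X (u + 1) ω - X u ω) 0 : ℝ) ^ α := fun u =>
    (Real.continuous_rpow_const hα1.le).measurable.comp
      (((hXm (u + 1)).sub (hXm u)).max measurable_const)
  have hNsm : Measurable[F 1] N := by
    have h0 : Measurable[F 1] (X 0) := ((hadapted 0).mono (F.mono (zero_le_one)) le_rfl)
    exact (((hadapted 1).sub h0).neg).max measurable_const
  have hNm : Measurable N := hNsm.mono (F.le 1) le_rfl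
  have hNnonneg : ∀ ω, 0 ≤ N ω := fun ω => le_max_right _ _
  -- choice of k0
  have hb : (1:ℝ) < (2:ℝ) ^ α := Real.one_lt_rpow_iff_of_pos (by norm_num) |>.mpr (Or.inl ⟨one_lt_two, hα1⟩)
  obtain ⟨k0, hk0⟩ := pow_unbounded_of_one_lt (4 * C') hb
  have hpowid : ∀ k : ℕ, ((2:ℝ) ^ k) ^ α = ((2:ℝ) ^ α) ^ k := by
    intro k
    rw [← Real.rpow_natCast (2:ℝ) k, ← Real.rpow_natCast ((2:ℝ)^α) k,
      ← Real.rpow_mul (by norm_num), ← Real.rpow_mul (by norm_num), mul_comm]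
  have hyk : ∀ k : ℕ, k0 ≤ k → 4 * C' ≤ ((2:ℝ) ^ k) ^ α := by
    intro k hk
    rw [hpowid k]
    exact le_trans hk0.le (pow_le_pow_right₀ hb.le hk)
  -- dyadic levels, time horizons, events
  set y : ℕ → ℝ := fun k => (2:ℝ) ^ k with hydef
  have hy_pos : ∀ k, 0 < y k := fun k => pow_pos two_pos k
  set n : ℕ → ℕ := fun j => ⌊(x + y (k0 + j)) ^ α / (2 * C')⌋₊ with hndef
  set A : ℕ → Set Ω := fun j => N ⁻¹' (Set.Ico (y (k0 + j)) (y (k0 + j + 1))) with hAdef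
  set S : ℕ → Set Ω := fun j => A j ∩ {ω | ∀ s ≤ n j, X s ω < x} with hSdef
  have hA1 : ∀ j, MeasurableSet[F 1] (A j) := fun j => hNsm measurableSet_Ico
  have hAm : ∀ j, MeasurableSet (A j) := fun j => F.le 1 _ (hA1 j)
  have hSsub : ∀ j, S j ⊆ A j := fun j => Set.inter_subset_left
  have hSm : ∀ j, MeasurableSet (S j) := by
    intro j
    refine (hAm j).inter ?_
    have : {ω | ∀ s ≤ n j, X s ω < x} = ⋂ (s : ℕ) (_ : s ≤ n j), {ω | X s ω < x} := by
      ext ω; simp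
    rw [this]
    exact MeasurableSet.biInter (Set.to_countable _) fun s _ => hXm s measurableSet_Iio
  have hdisj : Pairwise (Function.onFun Disjoint A) := by
    have key : ∀ i j, i < j → Disjoint (A i) (A j) := by
      intro i j hij
      rw [Set.disjoint_left]
      intro ω hi hj
      have h1 : N ω < y (k0 + i + 1) := hi.2
      have h2 : y (k0 + j) ≤ N ω := hj.1
      have : y (k0 + i + 1) ≤ y (k0 + j) :=
        pow_le_pow_right₀ one_le_two (by omega)
      linarith
    intro i j hij
    rcases lt_or_gt_of_ne hij with h | h
    · exact key i j h
    · exact (key j i h).symm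
  -- bounds on n j
  have hxy_nonneg : ∀ j, (0:ℝ) ≤ x + y (k0 + j) := fun j => by
    have := hy_pos (k0 + j); linarith
  have hn_up : ∀ j, (n j : ℝ) * C' ≤ (x + y (k0 + j)) ^ α / 2 := by
    intro j
    have h1 : (n j : ℝ) ≤ (x + y (k0 + j)) ^ α / (2 * C') :=
      Nat.floor_le (by positivity)
    calc (n j : ℝ) * C' ≤ (x + y (k0 + j)) ^ α / (2 * C') * C' := by
          exact mul_le_mul_of_nonneg_right h1 hC'.le
      _ = (x + y (k0 + j)) ^ α / 2 := by field_simp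
  have hn_low : ∀ j, y (k0 + j) ^ α / (4 * C') ≤ (n j : ℝ) := by
    intro j
    have h4 : 4 * C' ≤ y (k0 + j) ^ α := hyk _ (Nat.le_add_right _ _)
    have hone : (1:ℝ) ≤ y (k0 + j) ^ α / (4 * C') := by
      rw [le_div_iff₀ (by positivity)]; linarith
    have hfl : (x + y (k0 + j)) ^ α / (2 * C') - 1 < (n j : ℝ) :=
      Nat.sub_one_lt_floor _
    have hyx : y (k0 + j) ^ α ≤ (x + y (k0 + j)) ^ α :=
      Real.rpow_le_rpow (hy_pos _).le (by linarith) hα1.le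
    have : y (k0 + j) ^ α / (4 * C') ≤ y (k0 + j) ^ α / (2 * C') - 1 := by
      have : y (k0 + j) ^ α / (2 * C') = y (k0 + j) ^ α / (4 * C') + y (k0 + j) ^ α / (4 * C') := by
        field_simp; ring
      linarith
    have h2 : y (k0 + j) ^ α / (2 * C') ≤ (x + y (k0 + j)) ^ α / (2 * C') := by
      apply div_le_div_of_nonneg_right ?_ (by positivity)
      · exact hyx
    linarith
  have hn_one : ∀ j, 1 ≤ n j := by
    intro j
    have h4 : 4 * C' ≤ y (k0 + j) ^ α := hyk _ (Nat.le_add_right _ _)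
    have hone : (1:ℝ) ≤ y (k0 + j) ^ α / (4 * C') := by
      rw [le_div_iff₀ (by positivity)]; linarith
    exact_mod_cast (hone.trans (hn_low j))
  -- pointwise key estimate
  have hpoint : ∀ j ω, ω ∈ A j → ∀ s, s ≤ n j → x ≤ X s ω →
      (x + y (k0 + j)) ^ α ≤ ∑ u ∈ Finset.Ico 1 (n j), (max (X (u + 1) ω - X u ω) 0) ^ α := by
    intro j ω hω s hs hxs
    have hyj := hy_pos (k0 + j)
    have hNω : y (k0 + j) ≤ N ω := hω.1
    have hX1 : X 1 ω ≤ -y (k0 + j) := by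
      have h2 : y (k0 + j) ≤ -(X 1 ω - X 0 ω) := by
        rcases le_max_iff.mp hNω with h | h
        · exact h
        · linarith
      rw [hX0 ω] at h2; linarith
    have hs1 : 1 ≤ s := by
      rcases Nat.eq_zero_or_pos s with rfl | h
      · rw [hX0 ω] at hxs; linarith
      · exact h
    have htel : ∑ u ∈ Finset.Ico 1 s, (X (u + 1) ω - X u ω) = X s ω - X 1 ω := by
      rw [Finset.sum_Ico_eq_sub _ hs1, Finset.sum_range_sub (fun u => X u ω),
        Finset.sum_range_sub (fun u => X u ω)]
      ring
    have h1 : x + y (k0 + j) ≤ ∑ u ∈ Finset.Ico 1 s, max (X (u + 1) ω - X u ω) 0 := by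
      have hsum_le : ∑ u ∈ Finset.Ico 1 s, (X (u + 1) ω - X u ω)
          ≤ ∑ u ∈ Finset.Ico 1 s, max (X (u + 1) ω - X u ω) 0 :=
        Finset.sum_le_sum fun u _ => le_max_left _ _
      rw [htel] at hsum_le
      linarith
    calc (x + y (k0 + j)) ^ α
        ≤ (∑ u ∈ Finset.Ico 1 s, max (X (u + 1) ω - X u ω) 0) ^ α :=
          Real.rpow_le_rpow (hxy_nonneg j) h1 hα1.le
      _ ≤ ∑ u ∈ Finset.Ico 1 s, (max (X (u + 1) ω - X u ω) 0) ^ α :=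
          sum_rpow_le' _ _ (fun u _ => le_max_right _ _) hα1 hα2
      _ ≤ ∑ u ∈ Finset.Ico 1 (n j), (max (X (u + 1) ω - X u ω) 0) ^ α := by
          apply Finset.sum_le_sum_of_subset_of_nonneg (Finset.Ico_subset_Ico le_rfl hs)
          intro u _ _; exact Real.rpow_nonneg (le_max_right _ _) α
  -- conditional-expectation integral bound
  have hint : ∀ j (u : ℕ), 1 ≤ u →
      ∫⁻ ω in A j, ENNReal.ofReal ((max (X (u + 1) ω - X u ω) 0) ^ α) ∂μ
        ≤ ENNReal.ofReal C' * μ (A j) := by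
    intro j u hu
    have hAu : MeasurableSet[F u] (A j) := F.mono hu _ (hA1 j)
    have hint1 := hposint u
    have hlin : ∫⁻ ω in A j, ENNReal.ofReal ((max (X (u + 1) ω - X u ω) 0) ^ α) ∂μ
        = ENNReal.ofReal (∫ ω in A j, (max (X (u + 1) ω - X u ω) 0) ^ α ∂μ) :=
      (ofReal_integral_eq_lintegral_ofReal hint1.restrict
        (ae_of_all _ fun ω => Real.rpow_nonneg (le_max_right _ _) α)).symm
    have heq : ∫ ω in A j, (max (X (u + 1) ω - X u ω) 0) ^ α ∂μ
        = ∫ ω in A j, (μ[fun ω' => (max (X (u + 1) ω' - X u ω') 0) ^ α|F u]) ω ∂μ :=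
      (setIntegral_condExp (F.le u) hint1 hAu).symm
    have hle : ∫ ω in A j, (μ[fun ω' => (max (X (u + 1) ω' - X u ω') 0) ^ α|F u]) ω ∂μ
        ≤ ∫ ω in A j, C ∂μ :=
      integral_mono_ae integrable_condExp.restrict (integrable_const C).restrict
        (ae_restrict_of_ae (hpos u))
    have hconst : ∫ ω in A j, C ∂μ = (μ (A j)).toReal * C := by
      simp [integral_const, smul_eq_mul, measureReal_def]
    rw [hlin, heq]
    calc ENNReal.ofReal (∫ ω in A j, (μ[fun ω' => (max (X (u + 1) ω' - X u ω') 0) ^ α|F u]) ω ∂μ)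
        ≤ ENNReal.ofReal ((μ (A j)).toReal * C') := by
          apply ENNReal.ofReal_le_ofReal
          refine (hle.trans ?_)
          rw [hconst]
          exact mul_le_mul_of_nonneg_left hCC' ENNReal.toReal_nonneg
      _ = ENNReal.ofReal ((μ (A j)).toReal) * ENNReal.ofReal C' :=
          ENNReal.ofReal_mul ENNReal.toReal_nonneg
      _ = ENNReal.ofReal C' * μ (A j) := by
          rw [ENNReal.ofReal_toReal (measure_ne_top μ _), mul_comm]
  -- at least half of A j survives past time n j
  have hhalf : ∀ j, μ (A j) ≤ 2 * μ (S j) := by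
    intro j
    set B : Set Ω := A j \ S j with hBdef
    have hBm : MeasurableSet B := (hAm j).diff (hSm j)
    have hBA : B ⊆ A j := Set.diff_subset
    have hBsub : ∀ ω ∈ B, (x + y (k0 + j)) ^ α
        ≤ ∑ u ∈ Finset.Ico 1 (n j), (max (X (u + 1) ω - X u ω) 0) ^ α := by
      intro ω hωB
      obtain ⟨hωA, hωS⟩ := hωB
      have hns : ¬ (∀ s ≤ n j, X s ω < x) := fun h => hωS ⟨hωA, h⟩
      push_neg at hns
      obtain ⟨s, hs, hxs⟩ := hns
      exact hpoint j ω hωA s hs hxs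
    have hmeas : Measurable fun ω =>
        ENNReal.ofReal (∑ u ∈ Finset.Ico 1 (n j), (max (X (u + 1) ω - X u ω) 0) ^ α) := by
      apply ENNReal.measurable_ofReal.comp
      exact Finset.measurable_sum _ fun u _ => hpowm u
    have hstep : ENNReal.ofReal ((x + y (k0 + j)) ^ α) * μ B
        ≤ (n j : ℝ≥0∞) * (ENNReal.ofReal C' * μ (A j)) := by
      calc ENNReal.ofReal ((x + y (k0 + j)) ^ α) * μ B
          = ∫⁻ _ in B, ENNReal.ofReal ((x + y (k0 + j)) ^ α) ∂μ := by
            rw [setLIntegral_const, mul_comm]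
        _ ≤ ∫⁻ ω in B, ENNReal.ofReal
              (∑ u ∈ Finset.Ico 1 (n j), (max (X (u + 1) ω - X u ω) 0) ^ α) ∂μ :=
            setLIntegral_mono hmeas fun ω hω => ENNReal.ofReal_le_ofReal (hBsub ω hω)
        _ = ∫⁻ ω in B, ∑ u ∈ Finset.Ico 1 (n j),
              ENNReal.ofReal ((max (X (u + 1) ω - X u ω) 0) ^ α) ∂μ := by
            apply lintegral_congr
            intro ω
            exact ENNReal.ofReal_sum_of_nonneg fun u _ => Real.rpow_nonneg (le_max_right _ _) α
        _ = ∑ u ∈ Finset.Ico 1 (n j),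
              ∫⁻ ω in B, ENNReal.ofReal ((max (X (u + 1) ω - X u ω) 0) ^ α) ∂μ := by
            apply lintegral_finset_sum
            intro u _
            exact ENNReal.measurable_ofReal.comp (hpowm u)
        _ ≤ ∑ u ∈ Finset.Ico 1 (n j),
              ∫⁻ ω in A j, ENNReal.ofReal ((max (X (u + 1) ω - X u ω) 0) ^ α) ∂μ :=
            Finset.sum_le_sum fun u _ => lintegral_mono_set hBA
        _ ≤ ∑ _u ∈ Finset.Ico 1 (n j), ENNReal.ofReal C' * μ (A j) :=
            Finset.sum_le_sum fun u hu => hint j u (Finset.mem_Ico.mp hu).1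
        _ = ((n j - 1 : ℕ) : ℝ≥0∞) * (ENNReal.ofReal C' * μ (A j)) := by
            rw [Finset.sum_const, Nat.card_Ico, nsmul_eq_mul]
        _ ≤ (n j : ℝ≥0∞) * (ENNReal.ofReal C' * μ (A j)) := by
            gcongr
            exact_mod_cast Nat.sub_le (n j) 1
    have hc0 : ENNReal.ofReal ((x + y (k0 + j)) ^ α) ≠ 0 := by
      simp only [ne_eq, ENNReal.ofReal_eq_zero, not_le]
      exact Real.rpow_pos_of_pos (by have := hy_pos (k0 + j); linarith) α
    have hstep2 : (n j : ℝ≥0∞) * (ENNReal.ofReal C' * μ (A j))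
        ≤ ENNReal.ofReal ((x + y (k0 + j)) ^ α) * (μ (A j) / 2) := by
      have h1 : (n j : ℝ≥0∞) * ENNReal.ofReal C' = ENNReal.ofReal ((n j : ℝ) * C') := by
        rw [ENNReal.ofReal_mul (Nat.cast_nonneg _), ENNReal.ofReal_natCast]
      rw [← mul_assoc, h1]
      calc ENNReal.ofReal ((n j : ℝ) * C') * μ (A j)
          ≤ ENNReal.ofReal ((x + y (k0 + j)) ^ α / 2) * μ (A j) := by
            gcongr
            exact hn_up j
        _ = ENNReal.ofReal ((x + y (k0 + j)) ^ α) * (μ (A j) / 2) := by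
            rw [ENNReal.ofReal_div_of_pos two_pos, ENNReal.ofReal_ofNat,
              div_eq_mul_inv, div_eq_mul_inv]
            ring
    have hμB : μ B ≤ μ (A j) / 2 :=
      (ENNReal.mul_le_mul_iff_right hc0 ENNReal.ofReal_ne_top).mp (hstep.trans hstep2)
    have hsplit : μ (A j) ≤ μ (S j) + μ B := by
      refine (measure_mono ?_).trans (measure_union_le _ _)
      intro ω hω
      by_cases h : ω ∈ S j
      · exact Or.inl h
      · exact Or.inr ⟨hω, h⟩
    have h2 : μ (A j) / 2 + μ (A j) / 2 ≤ μ (S j) + μ (A j) / 2 := by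
      rw [ENNReal.add_halves]
      exact hsplit.trans (add_le_add_right hμB _)
    have h3 : μ (A j) / 2 ≤ μ (S j) :=
      (ENNReal.add_le_add_iff_right (by
        simp [ENNReal.div_eq_top, measure_ne_top μ (A j)])).mp h2
    calc μ (A j) = 2 * (μ (A j) / 2) := by
          rw [ENNReal.mul_div_cancel' (fun h => absurd h two_ne_zero) (fun h => absurd h ENNReal.ofNat_ne_top)]
      _ ≤ 2 * μ (S j) := by gcongr
  -- the first passage time functional
  set T : Ω → ℝ≥0∞ := fun ω => ⨅ (t : ℕ) (_ : x ≤ X t ω), (t : ℝ≥0∞) with hTdef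
  have hTm : Measurable T := by
    apply Measurable.iInf
    intro t
    have he : (fun ω => ⨅ (_ : x ≤ X t ω), (t : ℝ≥0∞)) =
        fun ω => if x ≤ X t ω then (t : ℝ≥0∞) else ⊤ := by
      ext ω; by_cases h : x ≤ X t ω <;> simp [h]
    rw [he]
    exact Measurable.ite (hXm t measurableSet_Ici) measurable_const measurable_const
  have hTpm : Measurable fun ω => T ω ^ (β / α) := hTm.pow_const _
  have hba : (0:ℝ) < β / α := div_pos hβ hα1
  -- pointwise lower bound on S j
  have hTS : ∀ j, ∀ ω ∈ S j, ((n j : ℝ≥0∞)) ^ (β / α) ≤ T ω ^ (β / α) := by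
    intro j ω hω
    apply ENNReal.rpow_le_rpow ?_ hba.le
    refine le_iInf fun t => le_iInf fun ht => ?_
    have h1 : ¬ t ≤ n j := fun hle => absurd (hω.2 t hle) (not_lt.mpr ht)
    exact_mod_cast (not_le.mp h1).le
  -- sum of survivals bounds the moment from below
  have hSdisj : Pairwise (Function.onFun Disjoint S) := fun i j hij =>
    (hdisj hij).mono (hSsub i) (hSsub j)
  have hsum_le : ∑' j, ((n j : ℝ≥0∞)) ^ (β / α) * μ (S j) ≤ ∫⁻ ω, T ω ^ (β / α) ∂μ := by
    have h1 : ∀ j, ((n j : ℝ≥0∞)) ^ (β / α) * μ (S j) ≤ ∫⁻ ω in S j, T ω ^ (β / α) ∂μ := by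
      intro j
      calc ((n j : ℝ≥0∞)) ^ (β / α) * μ (S j)
          = ∫⁻ _ in S j, ((n j : ℝ≥0∞)) ^ (β / α) ∂μ := by rw [setLIntegral_const]
        _ ≤ ∫⁻ ω in S j, T ω ^ (β / α) ∂μ := setLIntegral_mono hTpm fun ω hω => hTS j ω hω
    calc ∑' j, ((n j : ℝ≥0∞)) ^ (β / α) * μ (S j)
        ≤ ∑' j, ∫⁻ ω in S j, T ω ^ (β / α) ∂μ := ENNReal.tsum_le_tsum h1
      _ = ∫⁻ ω in ⋃ j, S j, T ω ^ (β / α) ∂μ := (lintegral_iUnion hSm hSdisj _).symm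
      _ ≤ ∫⁻ ω, T ω ^ (β / α) ∂μ := setLIntegral_le_lintegral _ _
  -- the union of the A j's carries infinite mass of N^β
  have hUm : MeasurableSet (⋃ j, A j) := MeasurableSet.iUnion hAm
  have hcover : ∀ ω, y k0 ≤ N ω → ∃ j, ω ∈ A j := by
    intro ω hω
    have hex : ∃ m : ℕ, N ω < y (k0 + m) := by
      obtain ⟨m, hm⟩ := pow_unbounded_of_one_lt (N ω) one_lt_two
      exact ⟨m, lt_of_lt_of_le hm (pow_le_pow_right₀ one_le_two (by omega))⟩
    classical
    have hm : N ω < y (k0 + Nat.find hex) := Nat.find_spec hex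
    have hm0 : Nat.find hex ≠ 0 := by
      intro h
      rw [h] at hm
      have hyy : y (k0 + 0) = y k0 := by norm_num
      rw [hyy] at hm
      linarith
    obtain ⟨j, hj⟩ : ∃ j, Nat.find hex = j + 1 := ⟨Nat.find hex - 1, by omega⟩
    refine ⟨j, ?_, ?_⟩
    · have := Nat.find_min hex (by omega : j < Nat.find hex)
      exact not_lt.mp this
    · rw [hj] at hm
      exact hm
  have hU : ∫⁻ ω in ⋃ j, A j, ENNReal.ofReal (N ω ^ β) ∂μ = ⊤ := by
    have htot : ∫⁻ ω, ENNReal.ofReal (N ω ^ β) ∂μ = ⊤ := by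
      have h := hneg 0 Set.univ MeasurableSet.univ (by simp)
      rw [Measure.restrict_univ] at h
      exact h
    by_contra hne
    have hcomp2 : ∫⁻ ω in (⋃ j, A j)ᶜ, ENNReal.ofReal (N ω ^ β) ∂μ
        ≤ ENNReal.ofReal (y k0 ^ β) * μ ((⋃ j, A j)ᶜ) := by
      calc ∫⁻ ω in (⋃ j, A j)ᶜ, ENNReal.ofReal (N ω ^ β) ∂μ
          ≤ ∫⁻ _ in (⋃ j, A j)ᶜ, ENNReal.ofReal (y k0 ^ β) ∂μ := by
            apply setLIntegral_mono measurable_const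
            intro ω hω
            apply ENNReal.ofReal_le_ofReal
            apply Real.rpow_le_rpow (hNnonneg ω) ?_ hβ.le
            by_contra hc
            push_neg at hc
            exact hω (Set.mem_iUnion.mpr (hcover ω hc.le))
        _ = ENNReal.ofReal (y k0 ^ β) * μ ((⋃ j, A j)ᶜ) := setLIntegral_const _ _
    have hfin : ∫⁻ ω, ENNReal.ofReal (N ω ^ β) ∂μ < ⊤ := by
      rw [← lintegral_add_compl _ hUm]
      apply ENNReal.add_lt_top.mpr
      constructor
      · exact lt_top_iff_ne_top.mpr hne
      · exact lt_of_le_of_lt hcomp2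
          (ENNReal.mul_lt_top ENNReal.ofReal_lt_top (measure_lt_top μ _))
    rw [htot] at hfin
    exact absurd hfin (lt_irrefl ⊤)
  have htsumA : ∑' j, ENNReal.ofReal (y (k0 + j) ^ β) * μ (A j) = ⊤ := by
    have h1 : ∫⁻ ω in ⋃ j, A j, ENNReal.ofReal (N ω ^ β) ∂μ
        = ∑' j, ∫⁻ ω in A j, ENNReal.ofReal (N ω ^ β) ∂μ := lintegral_iUnion hAm hdisj _
    have h2 : ∀ j, ∫⁻ ω in A j, ENNReal.ofReal (N ω ^ β) ∂μ
        ≤ ENNReal.ofReal ((2:ℝ) ^ β) * (ENNReal.ofReal (y (k0 + j) ^ β) * μ (A j)) := by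
      intro j
      calc ∫⁻ ω in A j, ENNReal.ofReal (N ω ^ β) ∂μ
          ≤ ∫⁻ _ in A j, ENNReal.ofReal (y (k0 + j + 1) ^ β) ∂μ :=
            setLIntegral_mono measurable_const fun ω hω =>
              ENNReal.ofReal_le_ofReal (Real.rpow_le_rpow (hNnonneg ω) hω.2.le hβ.le)
        _ = ENNReal.ofReal (y (k0 + j + 1) ^ β) * μ (A j) := setLIntegral_const _ _
        _ = ENNReal.ofReal ((2:ℝ) ^ β) * (ENNReal.ofReal (y (k0 + j) ^ β) * μ (A j)) := by
            rw [← mul_assoc, ← ENNReal.ofReal_mul (by positivity)]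
            congr 2
            show ((2:ℝ) ^ (k0 + j + 1)) ^ β = (2:ℝ) ^ β * ((2:ℝ) ^ (k0 + j)) ^ β
            rw [pow_succ, Real.mul_rpow (by positivity) (by norm_num)]
            ring
    by_contra hne
    have hfin2 : ∑' j, ENNReal.ofReal (y (k0 + j) ^ β) * μ (A j) < ⊤ := lt_top_iff_ne_top.mpr hne
    have hle2 : ∫⁻ ω in ⋃ j, A j, ENNReal.ofReal (N ω ^ β) ∂μ
        ≤ ENNReal.ofReal ((2:ℝ) ^ β) * ∑' j, ENNReal.ofReal (y (k0 + j) ^ β) * μ (A j) := by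
      rw [h1, ← ENNReal.tsum_mul_left]
      exact ENNReal.tsum_le_tsum h2
    rw [hU] at hle2
    exact absurd (top_le_iff.mp hle2)
      (ENNReal.mul_lt_top ENNReal.ofReal_lt_top hfin2).ne
  -- comparison between dyadic levels and the time horizons
  have hcomp : ∀ j, ENNReal.ofReal (y (k0 + j) ^ β)
      ≤ ENNReal.ofReal ((4 * C') ^ (β / α)) * ((n j : ℝ≥0∞)) ^ (β / α) := by
    intro j
    have hreal : y (k0 + j) ^ β ≤ (4 * C') ^ (β / α) * (n j : ℝ) ^ (β / α) := by
      have h2 : (y (k0 + j) ^ α / (4 * C')) ^ (β / α) ≤ (n j : ℝ) ^ (β / α) :=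
        Real.rpow_le_rpow (by positivity) (hn_low j) hba.le
      have h3 : (y (k0 + j) ^ α / (4 * C')) ^ (β / α)
          = y (k0 + j) ^ β / (4 * C') ^ (β / α) := by
        rw [Real.div_rpow (by positivity) (by positivity)]
        congr 1
        rw [← Real.rpow_mul (hy_pos _).le]
        congr 1
        field_simp
      rw [h3, div_le_iff₀ (by positivity)] at h2
      calc y (k0 + j) ^ β ≤ (n j : ℝ) ^ (β / α) * (4 * C') ^ (β / α) := h2
        _ = (4 * C') ^ (β / α) * (n j : ℝ) ^ (β / α) := mul_comm _ _
    calc ENNReal.ofReal (y (k0 + j) ^ β)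
        ≤ ENNReal.ofReal ((4 * C') ^ (β / α) * (n j : ℝ) ^ (β / α)) :=
          ENNReal.ofReal_le_ofReal hreal
      _ = ENNReal.ofReal ((4 * C') ^ (β / α)) * ENNReal.ofReal ((n j : ℝ) ^ (β / α)) :=
          ENNReal.ofReal_mul (by positivity)
      _ = ENNReal.ofReal ((4 * C') ^ (β / α)) * ((n j : ℝ≥0∞)) ^ (β / α) := by
          rw [← ENNReal.ofReal_rpow_of_nonneg (Nat.cast_nonneg _) hba.le,
            ENNReal.ofReal_natCast]
  -- conclusion
  set K : ℝ≥0∞ := ENNReal.ofReal ((4 * C') ^ (β / α)) with hKdef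
  have hchain : (⊤ : ℝ≥0∞) ≤ K * 2 * ∫⁻ ω, T ω ^ (β / α) ∂μ := by
    rw [← htsumA]
    calc ∑' j, ENNReal.ofReal (y (k0 + j) ^ β) * μ (A j)
        ≤ ∑' j, (K * ((n j : ℝ≥0∞)) ^ (β / α)) * (2 * μ (S j)) :=
          ENNReal.tsum_le_tsum fun j => mul_le_mul' (hcomp j) (hhalf j)
      _ = K * 2 * ∑' j, ((n j : ℝ≥0∞)) ^ (β / α) * μ (S j) := by
          rw [← ENNReal.tsum_mul_left]
          exact tsum_congr fun j => by ring
      _ ≤ K * 2 * ∫⁻ ω, T ω ^ (β / α) ∂μ := mul_le_mul_right hsum_le _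
  by_contra hne
  have hfin3 : K * 2 * ∫⁻ ω, T ω ^ (β / α) ∂μ < ⊤ :=
    ENNReal.mul_lt_top (ENNReal.mul_lt_top ENNReal.ofReal_lt_top ENNReal.ofNat_lt_top)
      (lt_top_iff_ne_top.mpr hne)
  exact absurd (top_le_iff.mp hchain) hfin3.ne
end

section
/- Let (X_t)_{t∈ℤ⁺} be adapted to (F_t), X_0 = 0, with increments Δ_t. Fix α ∈ (0,1], β > α, and suppose there exist c > 0, C < ∞, x₀ < ∞ with E[(Δ_t⁺)^α | F_t] ≤ C a.s. for all t and P[Δ_t⁻ > x | F_t] ≥ c x^{−β} a.s. for all x ≥ x₀ and all t. Define λ_x = max{t ∈ ℤ⁺ : X_t ≤ x}. Then for every x ∈ ℝ and every p > (β/α) − 1, E[λ_x^p] = ∞ (where λ_x := ∞ if the set is unbounded). -/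
open MeasureTheory Filter ENNReal

private lemma aux_add_rpow {pp a b : ℝ} (hp0 : 0 ≤ pp) (hp1 : pp ≤ 1) (ha : 0 ≤ a) (hb : 0 ≤ b) :
    (a + b) ^ pp ≤ a ^ pp + b ^ pp := by
  have h := NNReal.rpow_add_le_add_rpow a.toNNReal b.toNNReal hp0 hp1
  have h2 := (NNReal.coe_le_coe).2 h
  rw [NNReal.coe_rpow, NNReal.coe_add, NNReal.coe_add, NNReal.coe_rpow, NNReal.coe_rpow,
    Real.coe_toNNReal _ ha, Real.coe_toNNReal _ hb] at h2
  exact h2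

private lemma aux_sum_rpow {pp : ℝ} (hp0 : 0 < pp) (hp1 : pp ≤ 1) (s : Finset ℕ) (f : ℕ → ℝ)
    (hf : ∀ i, 0 ≤ f i) : (∑ i ∈ s, f i) ^ pp ≤ ∑ i ∈ s, (f i) ^ pp := by
  induction s using Finset.cons_induction with
  | empty => simp [Real.zero_rpow hp0.ne']
  | cons i s his ih =>
    rw [Finset.sum_cons, Finset.sum_cons]
    exact le_trans (aux_add_rpow hp0.le hp1 (hf i) (Finset.sum_nonneg fun j _ => hf j))
      (by gcongr)

private lemma aux_sum_le_of_rpow {αr aa : ℝ} (hα0 : 0 < αr) (hα1 : αr ≤ 1) (ha : 0 ≤ aa)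
    (s : Finset ℕ) (f : ℕ → ℝ) (hf : ∀ i, 0 ≤ f i)
    (h : ∑ i ∈ s, (f i) ^ αr ≤ aa) : ∑ i ∈ s, f i ≤ aa ^ (1/αr) := by
  have h1 : (∑ i ∈ s, f i) ^ αr ≤ aa := le_trans (aux_sum_rpow hα0 hα1 s f hf) h
  have h2 := Real.rpow_le_rpow (Real.rpow_nonneg (Finset.sum_nonneg fun j _ => hf j) _) h1
    (le_of_lt (by positivity : (0:ℝ) < 1/αr))
  rw [one_div, Real.rpow_rpow_inv (Finset.sum_nonneg fun j _ => hf j) hα0.ne'] at h2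
  rwa [one_div]

private lemma aux_rpow_diff {pp : ℝ} (hp : 0 < pp) (n : ℕ) (hn : 1 ≤ n) :
    pp * min 1 (2 ^ (1 - pp)) * ((n:ℝ)+1) ^ (pp-1) ≤ ((n:ℝ)+1) ^ pp - (n:ℝ) ^ pp := by
  set a : ℝ := (n : ℝ) with ha
  have ha1 : 1 ≤ a := by rw [ha]; exact_mod_cast hn
  have ha0 : 0 < a := lt_of_lt_of_le one_pos ha1
  obtain ⟨ξ, hξ, hslope⟩ := exists_hasDerivAt_eq_slope (fun y => y ^ pp)
    (fun y => pp * y ^ (pp - 1)) (by linarith : a < a + 1)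
    (fun y hy => by
      have : (0:ℝ) < y := lt_of_lt_of_le ha0 hy.1
      exact (Real.continuousAt_rpow_const y pp (Or.inl this.ne')).continuousWithinAt)
    (fun y hy => Real.hasDerivAt_rpow_const (Or.inl (lt_trans ha0 hy.1).ne'))
  have hξ0 : 0 < ξ := lt_trans ha0 hξ.1
  rw [add_sub_cancel_left, div_one] at hslope
  rw [← hslope]
  have key : min 1 (2 ^ (1 - pp)) * (a + 1) ^ (pp - 1) ≤ ξ ^ (pp - 1) := by
    rcases le_or_gt pp 1 with h1 | h1
    · have h2 : (a+1) ^ (pp-1) ≤ ξ ^ (pp-1) :=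
        Real.rpow_le_rpow_of_nonpos hξ0 hξ.2.le (by linarith)
      calc min 1 (2 ^ (1 - pp)) * (a + 1) ^ (pp - 1)
          ≤ 1 * (a+1) ^ (pp-1) := by
            apply mul_le_mul_of_nonneg_right (min_le_left _ _) (Real.rpow_nonneg (by linarith) _)
        _ = (a+1) ^ (pp-1) := one_mul _
        _ ≤ _ := h2
    · have h2 : a ^ (pp-1) ≤ ξ ^ (pp-1) :=
        Real.rpow_le_rpow ha0.le hξ.1.le (by linarith)
      have h3 : ((a+1)/2) ^ (pp-1) ≤ a ^ (pp-1) :=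
        Real.rpow_le_rpow (by linarith) (by linarith) (by linarith)
      have h4 : ((a+1)/2) ^ (pp-1) = (a+1) ^ (pp-1) * 2 ^ (1 - pp) := by
        rw [Real.div_rpow (by linarith) (by norm_num), div_eq_mul_inv,
          ← Real.rpow_neg (by norm_num), neg_sub]
      calc min 1 (2 ^ (1 - pp)) * (a + 1) ^ (pp - 1)
          ≤ 2 ^ (1-pp) * (a+1) ^ (pp-1) := by
            apply mul_le_mul_of_nonneg_right (min_le_right _ _) (Real.rpow_nonneg (by linarith) _)
        _ = ((a+1)/2) ^ (pp-1) := by rw [h4]; ring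
        _ ≤ _ := le_trans h3 h2
  calc pp * min 1 (2 ^ (1 - pp)) * (a+1) ^ (pp-1)
      = pp * (min 1 (2 ^ (1 - pp)) * (a+1) ^ (pp-1)) := by ring
    _ ≤ pp * ξ ^ (pp-1) := by exact mul_le_mul_of_nonneg_left key hp.le

set_option maxHeartbeats 2000000 in
lemma core_tail
    {Ω : Type*} {m0 : MeasurableSpace Ω} {μ : Measure Ω} [IsProbabilityMeasure μ]
    (F : Filtration ℕ m0) (X : ℕ → Ω → ℝ) (hadapted : Adapted F X)
    (hX0 : ∀ ω, X 0 ω = 0)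
    (α β c C x₀ : ℝ) (hα : α ∈ Set.Ioc (0:ℝ) 1) (hβ : α < β) (hc : 0 < c)
    (hposint : ∀ t, Integrable (fun ω => (max (X (t + 1) ω - X t ω) 0) ^ α) μ)
    (hpos : ∀ t, ∀ᵐ ω ∂μ,
      (μ[fun ω' => (max (X (t + 1) ω' - X t ω') 0) ^ α|F t]) ω ≤ C)
    (hneg : ∀ t, ∀ x, x₀ ≤ x → ∀ᵐ ω ∂μ,
      c * x ^ (-β) ≤ (μ[Set.indicator
        {ω' | x < max (-(X (t + 1) ω' - X t ω')) 0} (fun _ => (1:ℝ))|F t]) ω)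
    (x : ℝ) :
    ∃ ε : ℝ, 0 < ε ∧ ∀ n : ℕ, 1 ≤ n →
      ε * (n:ℝ) ^ (1 - β/α) ≤ (μ {ω | X n ω ≤ x}).toReal := by
  obtain ⟨hα0, hα1⟩ := hα
  have hβ0 : 0 < β := lt_trans hα0 hβ
  set C' : ℝ := max C 1 with hC'def
  have hC'1 : 1 ≤ C' := le_max_right _ _
  have hC'0 : 0 < C' := lt_of_lt_of_le one_pos hC'1
  have hCC' : C ≤ C' := le_max_left _ _
  set K : ℝ := (|x₀| + 1) + (8*C') ^ (1/α) + |x| + (max c 1) ^ (1/α) with hKdef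
  have hK0 : 0 < K := by
    have h1 : (0:ℝ) ≤ (8*C') ^ (1/α) := Real.rpow_nonneg (by positivity) _
    have h2 : (0:ℝ) ≤ (max c 1) ^ (1/α) := Real.rpow_nonneg (by positivity) _
    have h3 : (0:ℝ) ≤ |x| := abs_nonneg _
    have h4 : (0:ℝ) ≤ |x₀| := abs_nonneg _
    rw [hKdef]; linarith
  refine ⟨3/16 * c * K ^ (-β), by positivity, ?_⟩
  intro n hn
  -- basic quantities
  set T : ℝ := (n:ℝ) with hTdef
  have hT1 : 1 ≤ T := by rw [hTdef]; exact_mod_cast hn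
  have hT0 : 0 < T := lt_of_lt_of_le one_pos hT1
  set a : ℝ := 4*C'*T with hadef
  have ha0 : 0 < a := by positivity
  set M : ℝ := max x₀ 1 + (2*a) ^ (1/α) + |x| + (c*T) ^ (1/β) with hMdef
  have h2a : (0:ℝ) ≤ (2*a) ^ (1/α) := Real.rpow_nonneg (by positivity) _
  have hcT : (0:ℝ) ≤ (c*T) ^ (1/β) := Real.rpow_nonneg (by positivity) _
  have hM1 : 1 ≤ M := by
    have : (1:ℝ) ≤ max x₀ 1 := le_max_right _ _
    have h3 : (0:ℝ) ≤ |x| := abs_nonneg _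
    rw [hMdef]; linarith
  have hM0 : 0 < M := lt_of_lt_of_le one_pos hM1
  have hMx₀ : x₀ ≤ M := by
    have : x₀ ≤ max x₀ 1 := le_max_left _ _
    have h3 : (0:ℝ) ≤ |x| := abs_nonneg _
    rw [hMdef]; linarith
  have hM2a : (2*a) ^ (1/α) + |x| ≤ M := by
    have : (1:ℝ) ≤ max x₀ 1 := le_max_right _ _
    rw [hMdef]; linarith
  have hT1α : 1 ≤ T ^ (1/α) := Real.one_le_rpow hT1 (by positivity)
  have hMK : M ≤ K * T ^ (1/α) := by
    have ht1 : max x₀ 1 ≤ (|x₀| + 1) * T ^ (1/α) := by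
      have : max x₀ 1 ≤ |x₀| + 1 := by
        have h4 : (0:ℝ) ≤ |x₀| := abs_nonneg _
        apply max_le (le_trans (le_abs_self _) (by linarith)) (by linarith)
      calc max x₀ 1 ≤ |x₀| + 1 := this
        _ = (|x₀| + 1) * 1 := (mul_one _).symm
        _ ≤ (|x₀| + 1) * T ^ (1/α) := by
            apply mul_le_mul_of_nonneg_left hT1α (by positivity)
    have ht2 : (2*a) ^ (1/α) = (8*C') ^ (1/α) * T ^ (1/α) := by
      have : 2*a = (8*C')*T := by rw [hadef]; ring
      rw [this, Real.mul_rpow (by positivity) hT0.le]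
    have ht3 : |x| ≤ |x| * T ^ (1/α) := by
      nth_rewrite 1 [← mul_one |x|]
      apply mul_le_mul_of_nonneg_left hT1α (abs_nonneg _)
    have ht4 : (c*T) ^ (1/β) ≤ (max c 1) ^ (1/α) * T ^ (1/α) := by
      have hb1 : (1:ℝ) ≤ max c 1 * T := by
        calc (1:ℝ) = 1 * 1 := (one_mul 1).symm
          _ ≤ max c 1 * T := mul_le_mul (le_max_right _ _) hT1 one_pos.le (by positivity)
      calc (c*T) ^ (1/β) ≤ (max c 1 * T) ^ (1/β) := by
            apply Real.rpow_le_rpow (by positivity)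
              (mul_le_mul_of_nonneg_right (le_max_left _ _) hT0.le) (by positivity)
        _ ≤ (max c 1 * T) ^ (1/α) :=
            Real.rpow_le_rpow_of_exponent_le hb1
              (by apply one_div_le_one_div_of_le hα0 hβ.le)
        _ = (max c 1) ^ (1/α) * T ^ (1/α) := Real.mul_rpow (by positivity) hT0.le
    calc M = max x₀ 1 + (2*a) ^ (1/α) + |x| + (c*T) ^ (1/β) := hMdef
      _ ≤ (|x₀| + 1) * T ^ (1/α) + (8*C') ^ (1/α) * T ^ (1/α) + |x| * T ^ (1/α)
          + (max c 1) ^ (1/α) * T ^ (1/α) := by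
          rw [ht2]; exact add_le_add (add_le_add (add_le_add ht1 le_rfl) ht3) ht4
      _ = K * T ^ (1/α) := by rw [hKdef]; ring
  set q : ℝ := c * M ^ (-β) with hqdef
  have hq0 : 0 < q := by
    have : (0:ℝ) < M ^ (-β) := Real.rpow_pos_of_pos hM0 _
    positivity
  have hqT : q * T ≤ 1 := by
    have hMβ : c*T ≤ M ^ β := by
      calc c*T = ((c*T) ^ (1/β)) ^ β := by
            rw [one_div, Real.rpow_inv_rpow (by positivity) hβ0.ne']
        _ ≤ M ^ β := by
            apply Real.rpow_le_rpow hcT _ hβ0.le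
            rw [hMdef]
            have : (1:ℝ) ≤ max x₀ 1 := le_max_right _ _
            have h3 : (0:ℝ) ≤ |x| := abs_nonneg _
            linarith
    have hMβ0 : (0:ℝ) < M ^ β := Real.rpow_pos_of_pos hM0 _
    have : q * T = c * T / M ^ β := by
      rw [hqdef, Real.rpow_neg hM0.le]; ring
    rw [this, div_le_one hMβ0]
    exact hMβ
  have hqlow : c * K ^ (-β) * T ^ (-(β/α)) ≤ q := by
    have h1 : (K * T ^ (1/α)) ^ (-β) ≤ M ^ (-β) :=
      Real.rpow_le_rpow_of_nonpos hM0 hMK (by linarith)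
    have h2 : (K * T ^ (1/α)) ^ (-β) = K ^ (-β) * T ^ (-(β/α)) := by
      rw [Real.mul_rpow hK0.le (Real.rpow_nonneg hT0.le _)]
      congr 1
      rw [← Real.rpow_mul hT0.le]
      congr 1
      ring
    rw [hqdef]
    calc c * K ^ (-β) * T ^ (-(β/α)) = c * ((K * T ^ (1/α)) ^ (-β)) := by rw [h2]; ring
      _ ≤ c * M ^ (-β) := mul_le_mul_of_nonneg_left h1 hc.le
  -- increments and sets
  set g : ℕ → Ω → ℝ := fun u ω => (max (X (u+1) ω - X u ω) 0) ^ α with hgdef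
  have hg0 : ∀ u ω, 0 ≤ g u ω := fun u ω => Real.rpow_nonneg (le_max_right _ _) _
  have hgint : ∀ u, Integrable (g u) μ := fun u => hposint u
  have hXm : ∀ u s : ℕ, u ≤ s → Measurable[F s] (X u) :=
    fun u s h => ((hadapted u).mono (F.mono h) le_rfl)
  have hgm : ∀ u s : ℕ, u + 1 ≤ s → Measurable[F s] (g u) := by
    intro u s h
    have h1 : Measurable[F s] (fun ω => max (X (u+1) ω - X u ω) 0) :=
      ((hXm (u+1) s h).sub (hXm u s (by omega))).max measurable_const
    exact (Real.continuous_rpow_const hα0.le).measurable.comp h1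
  have hgm0 : ∀ u, Measurable (g u) := fun u => (hgm u (u+1) le_rfl).mono (F.le (u+1)) le_rfl
  set A : ℕ → Set Ω := fun s => {ω | M < max (-(X (s+1) ω - X s ω)) 0} with hAdef
  have hAm : ∀ s t : ℕ, s + 1 ≤ t → MeasurableSet[F t] (A s) := by
    intro s t h
    exact measurableSet_lt measurable_const
      ((((hXm (s+1) t h).sub (hXm s t (by omega))).neg).max measurable_const)
  have hAm0 : ∀ s, MeasurableSet (A s) := fun s => (F.le (s+1)) _ (hAm s (s+1) le_rfl)
  set Cs : ℕ → Set Ω := fun s => ⋂ u ∈ Finset.range s, (A u)ᶜ with hCsdef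
  have hCsm : ∀ s t : ℕ, s ≤ t → MeasurableSet[F t] (Cs s) := by
    intro s t h
    apply MeasurableSet.biInter (Finset.range s).countable_toSet
    intro u hu
    rw [Finset.mem_coe, Finset.mem_range] at hu
    exact (hAm u t (by omega)).compl
  have hCsm0 : ∀ s, MeasurableSet (Cs s) := fun s => (F.le s) _ (hCsm s s le_rfl)
  set Hs : ℕ → Set Ω := fun s => {ω | ∑ u ∈ Finset.range s, g u ω ≤ a} with hHdef
  have hHm : ∀ s t : ℕ, s ≤ t → MeasurableSet[F t] (Hs s) := by
    intro s t h
    apply measurableSet_le _ measurable_const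
    apply Finset.measurable_sum
    intro u hu
    rw [Finset.mem_range] at hu
    exact hgm u t (by omega)
  have hHm0 : ∀ s, MeasurableSet (Hs s) := fun s => (F.le s) _ (hHm s s le_rfl)
  set Bf : ℕ → Set Ω := fun s => {ω | ∑ u ∈ Finset.Ico (s+1) n, g u ω ≤ a} with hBfdef
  have hBfm0 : ∀ s, MeasurableSet (Bf s) :=
    fun s => measurableSet_le (Finset.measurable_sum _ (fun u _ => hgm0 u)) measurable_const
  set Bg : Set Ω := {ω | ∑ u ∈ Finset.range n, g u ω ≤ 2*a} with hBgdef
  have hBgm0 : MeasurableSet Bg :=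
    measurableSet_le (Finset.measurable_sum _ (fun u _ => hgm0 u)) measurable_const
  have hgoalm : MeasurableSet {ω | X n ω ≤ x} :=
    measurableSet_le ((hXm n n le_rfl).mono (F.le n) le_rfl) measurable_const
  -- expectation bounds
  have hEg : ∀ u, ∫ ω, g u ω ∂μ ≤ C' := by
    intro u
    have h1 : ∫ ω, g u ω ∂μ = ∫ ω, (μ[g u|F u]) ω ∂μ := (integral_condExp (F.le u)).symm
    rw [h1]
    calc ∫ ω, (μ[g u|F u]) ω ∂μ ≤ ∫ ω, (fun _ => C) ω ∂μ :=
          integral_mono_ae integrable_condExp (integrable_const C) (hpos u)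
      _ = C := by simp
      _ ≤ C' := hCC'
  have hMarkov : ∀ (s : Finset ℕ) (b : ℝ), 0 < b → s.card ≤ n →
      (μ {ω | b < ∑ u ∈ s, g u ω}).toReal ≤ C' * T / b := by
    intro s b hb hcard
    set E := {ω | b < ∑ u ∈ s, g u ω} with hEdef
    have hEm : MeasurableSet E :=
      measurableSet_lt measurable_const (Finset.measurable_sum _ (fun u _ => hgm0 u))
    have hsum_int : Integrable (fun ω => ∑ u ∈ s, g u ω) μ :=
      integrable_finset_sum _ (fun u _ => hgint u)
    have h2 : ∫ ω in E, b ∂μ = b * (μ E).toReal := by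
      rw [setIntegral_const, smul_eq_mul, measureReal_def]; ring
    have h1 : b * (μ E).toReal ≤ ∫ ω in E, ∑ u ∈ s, g u ω ∂μ := by
      rw [← h2]
      apply setIntegral_mono_on (integrableOn_const (measure_lt_top μ E).ne)
        hsum_int.integrableOn hEm
      intro ω hω
      exact le_of_lt hω
    have h3 : ∫ ω in E, ∑ u ∈ s, g u ω ∂μ ≤ ∫ ω, ∑ u ∈ s, g u ω ∂μ :=
      setIntegral_le_integral hsum_int
        (Filter.Eventually.of_forall (fun ω => Finset.sum_nonneg (fun u _ => hg0 u ω)))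
    have h4 : ∫ ω, ∑ u ∈ s, g u ω ∂μ = ∑ u ∈ s, ∫ ω, g u ω ∂μ :=
      integral_finset_sum _ (fun u _ => hgint u)
    have h5 : ∑ u ∈ s, ∫ ω, g u ω ∂μ ≤ (s.card : ℝ) * C' := by
      calc ∑ u ∈ s, ∫ ω, g u ω ∂μ ≤ ∑ u ∈ s, C' := Finset.sum_le_sum (fun u _ => hEg u)
        _ = (s.card : ℝ) * C' := by rw [Finset.sum_const, nsmul_eq_mul]
    have h6 : (s.card : ℝ) * C' ≤ T * C' := by
      apply mul_le_mul_of_nonneg_right _ hC'0.le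
      rw [hTdef]; exact_mod_cast hcard
    rw [le_div_iff₀ hb]
    nlinarith [h1, h3, h4, h5, h6]
  have hH4 : ∀ s : ℕ, s ≤ n → (μ (Hs s)ᶜ).toReal ≤ 1/4 := by
    intro s hs
    have hcompl : (Hs s)ᶜ = {ω | a < ∑ u ∈ Finset.range s, g u ω} := by
      ext ω
      simp only [Set.mem_compl_iff, hHdef, Set.mem_setOf_eq, not_le]
    rw [hcompl]
    have := hMarkov (Finset.range s) a ha0 (by rwa [Finset.card_range])
    calc (μ {ω | a < ∑ u ∈ Finset.range s, g u ω}).toReal ≤ C' * T / a := this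
      _ = 1/4 := by rw [hadef]; field_simp
  have hB8 : (μ Bgᶜ).toReal ≤ 1/8 := by
    have hcompl : Bgᶜ = {ω | 2*a < ∑ u ∈ Finset.range n, g u ω} := by
      ext ω
      simp only [Set.mem_compl_iff, hBgdef, Set.mem_setOf_eq, not_le]
    rw [hcompl]
    have := hMarkov (Finset.range n) (2*a) (by positivity) (by rw [Finset.card_range])
    calc (μ {ω | 2*a < ∑ u ∈ Finset.range n, g u ω}).toReal ≤ C' * T / (2*a) := this
      _ = 1/8 := by rw [hadef]; field_simp; ring
  have htower : ∀ s u : ℕ, s ≤ u → (μ[g u|F s]) ≤ᵐ[μ] fun _ => C' := by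
    intro s u hsu
    have h1 : μ[g u|F s] =ᵐ[μ] μ[μ[g u|F u]|F s] :=
      (condExp_condExp_of_le (F.mono hsu) (F.le u)).symm
    have h2 : μ[μ[g u|F u]|F s] ≤ᵐ[μ] μ[(fun _ => C)|F s] :=
      condExp_mono integrable_condExp (integrable_const C) (hpos u)
    have h3 : μ[(fun _ => C)|F s] = fun _ => C := condExp_const (F.le s) C
    filter_upwards [h1, h2] with ω hω1 hω2
    rw [hω1]
    calc (μ[μ[g u|F u]|F s]) ω ≤ (μ[(fun _ => C)|F s]) ω := hω2
      _ = C := by rw [h3]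
      _ ≤ C' := hCC'
  have hcond : ∀ s : ℕ, μ[((Bf s)ᶜ).indicator (fun _ => (1:ℝ))|F (s+1)] ≤ᵐ[μ]
      fun _ => (1:ℝ)/4 := by
    intro s
    have hpt : ((Bf s)ᶜ).indicator (fun _ => (1:ℝ)) ≤
        fun ω => a⁻¹ * ∑ u ∈ Finset.Ico (s+1) n, g u ω := by
      intro ω
      by_cases hω : ω ∈ (Bf s)ᶜ
      · rw [Set.indicator_of_mem hω]
        have hlt : a < ∑ u ∈ Finset.Ico (s+1) n, g u ω := by
          have := hω; rw [Set.mem_compl_iff, hBfdef] at this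
          simpa [not_le] using this
        calc (1:ℝ) = a⁻¹ * a := (inv_mul_cancel₀ ha0.ne').symm
          _ ≤ a⁻¹ * ∑ u ∈ Finset.Ico (s+1) n, g u ω :=
              mul_le_mul_of_nonneg_left hlt.le (by positivity)
      · rw [Set.indicator_of_notMem hω]
        have : (0:ℝ) ≤ ∑ u ∈ Finset.Ico (s+1) n, g u ω :=
          Finset.sum_nonneg (fun u _ => hg0 u ω)
        positivity
    have hint1 : Integrable (((Bf s)ᶜ).indicator (fun _ => (1:ℝ))) μ :=
      (integrable_const 1).indicator (hBfm0 s).compl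
    have hint2 : Integrable (fun ω => a⁻¹ * ∑ u ∈ Finset.Ico (s+1) n, g u ω) μ :=
      (integrable_finset_sum _ (fun u _ => hgint u)).const_mul _
    have h1 := condExp_mono (m := F (s+1)) hint1 hint2 (Filter.Eventually.of_forall hpt)
    have h2 : μ[fun ω => a⁻¹ * ∑ u ∈ Finset.Ico (s+1) n, g u ω|F (s+1)] =ᵐ[μ]
        fun ω => a⁻¹ * (μ[fun ω' => ∑ u ∈ Finset.Ico (s+1) n, g u ω'|F (s+1)]) ω := by
      have := condExp_smul (μ := μ) (m := F (s+1)) (𝕜 := ℝ) a⁻¹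
        (fun ω => ∑ u ∈ Finset.Ico (s+1) n, g u ω)
      filter_upwards [this] with ω hω
      exact hω
    have hfun : (fun ω' => ∑ u ∈ Finset.Ico (s+1) n, g u ω')
        = ∑ u ∈ Finset.Ico (s+1) n, g u := by
      funext ω'; rw [Finset.sum_apply]
    have h3 : μ[fun ω' => ∑ u ∈ Finset.Ico (s+1) n, g u ω'|F (s+1)] =ᵐ[μ]
        ∑ u ∈ Finset.Ico (s+1) n, μ[g u|F (s+1)] := by
      rw [hfun]
      exact condExp_finset_sum (fun u _ => hgint u) _
    have h4 : ∀ᵐ ω ∂μ, ∀ u ∈ Finset.Ico (s+1) n, (μ[g u|F (s+1)]) ω ≤ C' := by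
      rw [Filter.eventually_all_finset]
      intro u hu
      exact htower (s+1) u (Finset.mem_Ico.1 hu).1
    filter_upwards [h1, h2, h3, h4] with ω hω1 hω2 hω3 hω4
    calc (μ[((Bf s)ᶜ).indicator (fun _ => (1:ℝ))|F (s+1)]) ω
        ≤ (μ[fun ω' => a⁻¹ * ∑ u ∈ Finset.Ico (s+1) n, g u ω'|F (s+1)]) ω := hω1
      _ = a⁻¹ * (μ[fun ω' => ∑ u ∈ Finset.Ico (s+1) n, g u ω'|F (s+1)]) ω := hω2
      _ = a⁻¹ * (∑ u ∈ Finset.Ico (s+1) n, μ[g u|F (s+1)]) ω := by rw [hω3]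
      _ = a⁻¹ * ∑ u ∈ Finset.Ico (s+1) n, (μ[g u|F (s+1)]) ω := by
          rw [Finset.sum_apply]
      _ ≤ a⁻¹ * ((Finset.Ico (s+1) n).card * C') := by
          apply mul_le_mul_of_nonneg_left _ (by positivity)
          calc ∑ u ∈ Finset.Ico (s+1) n, (μ[g u|F (s+1)]) ω
              ≤ ∑ u ∈ Finset.Ico (s+1) n, C' := Finset.sum_le_sum hω4
            _ = ((Finset.Ico (s+1) n).card : ℝ) * C' := by
                rw [Finset.sum_const, nsmul_eq_mul]
      _ ≤ a⁻¹ * (T * C') := by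
          apply mul_le_mul_of_nonneg_left _ (by positivity)
          apply mul_le_mul_of_nonneg_right _ hC'0.le
          rw [hTdef, Nat.card_Ico]
          exact_mod_cast Nat.sub_le _ _
      _ = 1/4 := by rw [hadef]; field_simp
  -- one-jump conditional bound
  have hP1 : ∀ s : ℕ, ∀ S : Set Ω, MeasurableSet[F s] S →
      q * (μ S).toReal ≤ (μ (S ∩ A s)).toReal := by
    intro s S hS
    have hind : Integrable ((A s).indicator (fun _ => (1:ℝ))) μ :=
      (integrable_const 1).indicator (hAm0 s)
    have h1 : ∫ ω in S, (fun _ => q) ω ∂μ = q * (μ S).toReal := by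
      rw [setIntegral_const, smul_eq_mul, measureReal_def]; ring
    have h2 : ∫ ω in S, (fun _ => q) ω ∂μ ≤
        ∫ ω in S, (μ[(A s).indicator (fun _ => (1:ℝ))|F s]) ω ∂μ := by
      apply setIntegral_mono_ae (integrableOn_const (measure_lt_top μ S).ne)
        integrable_condExp.integrableOn
      exact hneg s M hMx₀
    have h3 : ∫ ω in S, (μ[(A s).indicator (fun _ => (1:ℝ))|F s]) ω ∂μ =
        ∫ ω in S, (A s).indicator (fun _ => (1:ℝ)) ω ∂μ :=
      setIntegral_condExp (F.le s) hind hS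
    have h4 : ∫ ω in S, (A s).indicator (fun _ => (1:ℝ)) ω ∂μ =
        ∫ _ω in S ∩ A s, (1:ℝ) ∂μ := setIntegral_indicator (hAm0 s)
    have h5 : ∫ _ω in S ∩ A s, (1:ℝ) ∂μ = (μ (S ∩ A s)).toReal := by
      rw [setIntegral_const, smul_eq_mul, measureReal_def, mul_one]
    rw [← h1, ← h5, ← h4, ← h3]
    exact h2
  -- future-control conditional bound
  have hP2 : ∀ s : ℕ, ∀ S : Set Ω, MeasurableSet[F (s+1)] S →
      3/4 * (μ S).toReal ≤ (μ (S ∩ Bf s)).toReal := by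
    intro s S hS
    have hS0 : MeasurableSet S := (F.le (s+1)) _ hS
    have hsplit : μ (S ∩ Bf s) + μ (S \ Bf s) = μ S := measure_inter_add_diff S (hBfm0 s)
    have hdiff : S \ Bf s = S ∩ (Bf s)ᶜ := Set.diff_eq _ _
    have hind : Integrable (((Bf s)ᶜ).indicator (fun _ => (1:ℝ))) μ :=
      (integrable_const 1).indicator (hBfm0 s).compl
    have h2 : (μ (S ∩ (Bf s)ᶜ)).toReal ≤ 1/4 * (μ S).toReal := by
      have e1 : (μ (S ∩ (Bf s)ᶜ)).toReal = ∫ _ω in S ∩ (Bf s)ᶜ, (1:ℝ) ∂μ := by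
        rw [setIntegral_const, smul_eq_mul, measureReal_def, mul_one]
      have e2 : ∫ _ω in S ∩ (Bf s)ᶜ, (1:ℝ) ∂μ =
          ∫ ω in S, ((Bf s)ᶜ).indicator (fun _ => (1:ℝ)) ω ∂μ :=
        (setIntegral_indicator (hBfm0 s).compl).symm
      have e3 : ∫ ω in S, ((Bf s)ᶜ).indicator (fun _ => (1:ℝ)) ω ∂μ =
          ∫ ω in S, (μ[((Bf s)ᶜ).indicator (fun _ => (1:ℝ))|F (s+1)]) ω ∂μ :=
        (setIntegral_condExp (F.le (s+1)) hind hS).symm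
      have e4 : ∫ ω in S, (μ[((Bf s)ᶜ).indicator (fun _ => (1:ℝ))|F (s+1)]) ω ∂μ ≤
          ∫ ω in S, (fun _ => (1:ℝ)/4) ω ∂μ := by
        apply setIntegral_mono_ae integrable_condExp.integrableOn
          (integrableOn_const (measure_lt_top μ S).ne)
        exact hcond s
      have e5 : ∫ ω in S, (fun _ => (1:ℝ)/4) ω ∂μ = 1/4 * (μ S).toReal := by
        rw [setIntegral_const, smul_eq_mul, measureReal_def]; ring
      rw [e1, e2, e3, ← e5]
      exact e4
    have hfin1 : μ (S ∩ Bf s) ≠ ⊤ := measure_ne_top μ _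
    have hfin2 : μ (S \ Bf s) ≠ ⊤ := measure_ne_top μ _
    have htr : (μ (S ∩ Bf s)).toReal + (μ (S \ Bf s)).toReal = (μ S).toReal := by
      rw [← ENNReal.toReal_add hfin1 hfin2, hsplit]
    rw [hdiff] at htr
    linarith
  -- path inclusions
  have hXsum : ∀ ω, X n ω = ∑ u ∈ Finset.range n, (X (u+1) ω - X u ω) := by
    intro ω
    rw [Finset.sum_range_sub (fun u => X u ω) n, hX0 ω, sub_zero]
  have hjump : ∀ s (ω : Ω), ω ∈ A s → X (s+1) ω - X s ω ≤ -M := by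
    intro s ω hω
    have hω' : M < max (-(X (s+1) ω - X s ω)) 0 := hω
    rcases lt_max_iff.1 hω' with h | h
    · linarith
    · linarith
  have hsumbound : ∀ (t : Finset ℕ) (b : ℝ) (ω : Ω), 0 ≤ b →
      (∑ u ∈ t, g u ω ≤ b) → ∑ u ∈ t, (X (u+1) ω - X u ω) ≤ b ^ (1/α) := by
    intro t b ω hb hsum
    calc ∑ u ∈ t, (X (u+1) ω - X u ω) ≤ ∑ u ∈ t, max (X (u+1) ω - X u ω) 0 :=
          Finset.sum_le_sum (fun u _ => le_max_left _ _)
      _ ≤ b ^ (1/α) := by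
          apply aux_sum_le_of_rpow hα0 hα1 hb t (fun u => max (X (u+1) ω - X u ω) 0)
            (fun u => le_max_right _ _)
          exact hsum
  have h2rt : 2 * a ^ (1/α) ≤ (2*a) ^ (1/α) := by
    rw [Real.mul_rpow (by norm_num) ha0.le]
    have h21 : (2:ℝ) = 2 ^ (1:ℝ) := (Real.rpow_one 2).symm
    apply mul_le_mul_of_nonneg_right _ (Real.rpow_nonneg ha0.le _)
    nth_rewrite 1 [h21]
    apply Real.rpow_le_rpow_of_exponent_le (by norm_num)
    rw [le_div_iff₀ hα0]; linarith
  have hMbig : (2*a) ^ (1/α) - M ≤ x := by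
    have := neg_abs_le x
    linarith [hM2a]
  have hIncl1 : ∀ s, s < n → ((Cs s ∩ Hs s) ∩ A s) ∩ Bf s ⊆ {ω | X n ω ≤ x} := by
    intro s hs ω hω
    obtain ⟨⟨⟨_, hH⟩, hA⟩, hB⟩ := hω
    have hH' : ∑ u ∈ Finset.range s, g u ω ≤ a := hH
    have hB' : ∑ u ∈ Finset.Ico (s+1) n, g u ω ≤ a := hB
    have e1 : ∑ u ∈ Finset.range n, (X (u+1) ω - X u ω) =
        ∑ u ∈ Finset.range s, (X (u+1) ω - X u ω) +
        ∑ u ∈ Finset.Ico s n, (X (u+1) ω - X u ω) := by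
      rw [Finset.range_eq_Ico, Finset.range_eq_Ico,
        Finset.sum_Ico_consecutive _ (Nat.zero_le s) hs.le]
    have e2 : ∑ u ∈ Finset.Ico s n, (X (u+1) ω - X u ω) =
        (X (s+1) ω - X s ω) + ∑ u ∈ Finset.Ico (s+1) n, (X (u+1) ω - X u ω) :=
      Finset.sum_eq_sum_Ico_succ_bot hs _
    have b1 : ∑ u ∈ Finset.range s, (X (u+1) ω - X u ω) ≤ a ^ (1/α) :=
      hsumbound _ a ω ha0.le hH'
    have b2 : ∑ u ∈ Finset.Ico (s+1) n, (X (u+1) ω - X u ω) ≤ a ^ (1/α) :=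
      hsumbound _ a ω ha0.le hB'
    have b3 : X (s+1) ω - X s ω ≤ -M := hjump s ω hA
    show X n ω ≤ x
    rw [hXsum ω, e1, e2]
    have t1 := add_le_add b1 (add_le_add b3 b2)
    exact le_trans t1 (by linarith [h2rt, hMbig])
  have hIncl2 : (Cs n)ᶜ ∩ Bg ⊆ {ω | X n ω ≤ x} := by
    intro ω hω
    obtain ⟨hD, hB⟩ := hω
    have hB' : ∑ u ∈ Finset.range n, g u ω ≤ 2*a := hB
    have hex : ∃ s ∈ Finset.range n, ω ∈ A s := by
      by_contra hno
      push_neg at hno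
      exact hD (Set.mem_iInter₂.2 (fun u hu => hno u hu))
    obtain ⟨s, hs, hA⟩ := hex
    have e1 : ∑ u ∈ Finset.range n, (X (u+1) ω - X u ω) =
        (X (s+1) ω - X s ω) + ∑ u ∈ (Finset.range n).erase s, (X (u+1) ω - X u ω) :=
      (Finset.add_sum_erase _ _ hs).symm
    have b1 : ∑ u ∈ (Finset.range n).erase s, (X (u+1) ω - X u ω) ≤ (2*a) ^ (1/α) := by
      calc ∑ u ∈ (Finset.range n).erase s, (X (u+1) ω - X u ω)
          ≤ ∑ u ∈ (Finset.range n).erase s, max (X (u+1) ω - X u ω) 0 :=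
            Finset.sum_le_sum (fun u _ => le_max_left _ _)
        _ ≤ ∑ u ∈ Finset.range n, max (X (u+1) ω - X u ω) 0 :=
            Finset.sum_le_sum_of_subset_of_nonneg (Finset.erase_subset _ _)
              (fun u _ _ => le_max_right _ _)
        _ ≤ (2*a) ^ (1/α) := by
            apply aux_sum_le_of_rpow hα0 hα1 (by positivity) _
              (fun u => max (X (u+1) ω - X u ω) 0) (fun u => le_max_right _ _)
            exact hB'
    have b3 : X (s+1) ω - X s ω ≤ -M := hjump s ω hA
    show X n ω ≤ x
    rw [hXsum ω, e1]
    have t1 := add_le_add b3 b1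
    exact le_trans t1 (by linarith [hMbig])
  -- the disjoint events
  set Es : ℕ → Set Ω := fun s => ((Cs s ∩ Hs s) ∩ A s) ∩ Bf s with hEsdef
  have hEsm : ∀ s, MeasurableSet (Es s) :=
    fun s => (((hCsm0 s).inter (hHm0 s)).inter (hAm0 s)).inter (hBfm0 s)
  have hkey : ∀ s t : ℕ, s < t → Disjoint (Es s) (Es t) := by
    intro s t hst
    rw [Set.disjoint_left]
    intro ω hωs hωt
    have hA : ω ∈ A s := hωs.1.2
    have hC : ω ∈ Cs t := hωt.1.1.1
    have : ω ∈ (A s)ᶜ := by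
      have := Set.mem_iInter₂.1 hC s (Finset.mem_range.2 hst)
      exact this
    exact this hA
  have hdisj : (↑(Finset.range n) : Set ℕ).PairwiseDisjoint Es := by
    intro s _ t _ hst
    rcases lt_or_gt_of_ne hst with h | h
    · exact hkey s t h
    · exact (hkey t s h).symm
  have hsum_le : ∑ s ∈ Finset.range n, (μ (Es s)).toReal ≤ (μ {ω | X n ω ≤ x}).toReal := by
    have h1 : μ (⋃ s ∈ Finset.range n, Es s) = ∑ s ∈ Finset.range n, μ (Es s) :=
      measure_biUnion_finset hdisj (fun s _ => hEsm s)
    have h2 : (⋃ s ∈ Finset.range n, Es s) ⊆ {ω | X n ω ≤ x} := by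
      apply Set.iUnion₂_subset
      intro s hs
      exact hIncl1 s (Finset.mem_range.1 hs)
    have h3 : μ (⋃ s ∈ Finset.range n, Es s) ≤ μ {ω | X n ω ≤ x} := measure_mono h2
    calc ∑ s ∈ Finset.range n, (μ (Es s)).toReal
        = (∑ s ∈ Finset.range n, μ (Es s)).toReal := by
          rw [ENNReal.toReal_sum (fun s _ => measure_ne_top μ _)]
      _ = (μ (⋃ s ∈ Finset.range n, Es s)).toReal := by rw [h1]
      _ ≤ (μ {ω | X n ω ≤ x}).toReal := ENNReal.toReal_mono (measure_ne_top μ _) h3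
  -- final exponent comparison
  have hfinal : 3/16 * c * K ^ (-β) * T ^ (1 - β/α) ≤ 3/16 * q * T := by
    have he : T ^ (1 - β/α) = T * T ^ (-(β/α)) := by
      rw [show (1 - β/α) = 1 + (-(β/α)) by ring, Real.rpow_add hT0, Real.rpow_one]
    rw [he]
    have := mul_le_mul_of_nonneg_right hqlow hT0.le
    calc 3/16 * c * K ^ (-β) * (T * T ^ (-(β/α)))
        = 3/16 * (c * K ^ (-β) * T ^ (-(β/α)) * T) := by ring
      _ ≤ 3/16 * (q * T) := by linarith [this]
      _ = 3/16 * q * T := by ring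
  have hmain : 3/16 * q * T ≤ (μ {ω | X n ω ≤ x}).toReal := by
    rcases le_or_gt (1/2) ((μ (Cs n)).toReal) with hcase | hcase
    · -- case A : no early jump is reasonably likely
      have hstep : ∀ s, s < n → 3/16 * q ≤ (μ (Es s)).toReal := by
        intro s hs
        have hCsHs : 1/4 ≤ (μ (Cs s ∩ Hs s)).toReal := by
          have hsub : Cs n ⊆ (Cs s ∩ Hs s) ∪ (Hs s)ᶜ := by
            intro ω hω
            by_cases hH : ω ∈ Hs s
            · left
              refine ⟨?_, hH⟩
              apply Set.mem_iInter₂.2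
              intro u hu
              rw [Finset.mem_range] at hu
              exact Set.mem_iInter₂.1 hω u (Finset.mem_range.2 (by omega))
            · right; exact hH
          have h1 : μ (Cs n) ≤ μ ((Cs s ∩ Hs s) ∪ (Hs s)ᶜ) := measure_mono hsub
          have h2 : μ ((Cs s ∩ Hs s) ∪ (Hs s)ᶜ) ≤ μ (Cs s ∩ Hs s) + μ (Hs s)ᶜ :=
            measure_union_le _ _
          have h3 : (μ (Cs n)).toReal ≤ (μ (Cs s ∩ Hs s)).toReal + (μ (Hs s)ᶜ).toReal := by
            have h4 := le_trans h1 h2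
            have h5 := ENNReal.toReal_mono (by
              exact ENNReal.add_ne_top.2 ⟨measure_ne_top μ _, measure_ne_top μ _⟩) h4
            rwa [ENNReal.toReal_add (measure_ne_top μ _) (measure_ne_top μ _)] at h5
          have h6 := hH4 s hs.le
          linarith
        have h1 := hP1 s (Cs s ∩ Hs s) ((hCsm s s le_rfl).inter (hHm s s le_rfl))
        have h2 := hP2 s ((Cs s ∩ Hs s) ∩ A s)
          (((hCsm s (s+1) (by omega)).inter (hHm s (s+1) (by omega))).inter
            (hAm s (s+1) le_rfl))
        have h7 : q * (1/4) ≤ (μ ((Cs s ∩ Hs s) ∩ A s)).toReal := by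
          calc q * (1/4) ≤ q * (μ (Cs s ∩ Hs s)).toReal :=
                mul_le_mul_of_nonneg_left hCsHs hq0.le
            _ ≤ (μ ((Cs s ∩ Hs s) ∩ A s)).toReal := h1
        calc 3/16 * q = 3/4 * (q * (1/4)) := by ring
          _ ≤ 3/4 * (μ ((Cs s ∩ Hs s) ∩ A s)).toReal := by linarith [h7]
          _ ≤ (μ (Es s)).toReal := h2
      calc 3/16 * q * T = ∑ _s ∈ Finset.range n, 3/16 * q := by
            rw [Finset.sum_const, Finset.card_range, nsmul_eq_mul, hTdef]; ring
        _ ≤ ∑ s ∈ Finset.range n, (μ (Es s)).toReal := by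
            apply Finset.sum_le_sum
            intro s hs
            exact hstep s (Finset.mem_range.1 hs)
        _ ≤ (μ {ω | X n ω ≤ x}).toReal := hsum_le
    · -- case B : an early jump is likely
      have hDhalf : 1/2 ≤ (μ (Cs n)ᶜ).toReal := by
        have h1 : μ (Cs n)ᶜ = 1 - μ (Cs n) := prob_compl_eq_one_sub (hCsm0 n)
        have h2 : (μ (Cs n)ᶜ).toReal = 1 - (μ (Cs n)).toReal := by
          rw [h1, ENNReal.toReal_sub_of_le prob_le_one one_ne_top, ENNReal.toReal_one]
        rw [h2]
        linarith
      have hsub : (Cs n)ᶜ ⊆ ((Cs n)ᶜ ∩ Bg) ∪ Bgᶜ := by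
        intro ω hω
        by_cases hB : ω ∈ Bg
        · left; exact ⟨hω, hB⟩
        · right; exact hB
      have h1 : μ (Cs n)ᶜ ≤ μ ((Cs n)ᶜ ∩ Bg) + μ Bgᶜ :=
        le_trans (measure_mono hsub) (measure_union_le _ _)
      have h3 : (μ (Cs n)ᶜ).toReal ≤ (μ ((Cs n)ᶜ ∩ Bg)).toReal + (μ Bgᶜ).toReal := by
        have h5 := ENNReal.toReal_mono (by
          exact ENNReal.add_ne_top.2 ⟨measure_ne_top μ _, measure_ne_top μ _⟩) h1
        rwa [ENNReal.toReal_add (measure_ne_top μ _) (measure_ne_top μ _)] at h5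
      have h4 : (μ ((Cs n)ᶜ ∩ Bg)).toReal ≤ (μ {ω | X n ω ≤ x}).toReal :=
        ENNReal.toReal_mono (measure_ne_top μ _) (measure_mono hIncl2)
      have h6 : 3/16 * q * T ≤ 3/8 := by nlinarith [hqT, hq0]
      linarith [hB8]
  calc 3/16 * c * K ^ (-β) * (n:ℝ) ^ (1 - β/α) = 3/16 * c * K ^ (-β) * T ^ (1 - β/α) := by
        rw [hTdef]
    _ ≤ 3/16 * q * T := hfinal
    _ ≤ (μ {ω | X n ω ≤ x}).toReal := hmain


set_option maxHeartbeats 1000000 in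
/-- Theorem 8 of the paper: non-existence of moments of order `p > β/α - 1` for
the last exit time `λ_x = max{t : X_t ≤ x}` (with `λ_x := ∞` if `{t : X_t ≤ x}`
is unbounded), under a bounded conditional `α`-moment for `Δ_t⁺` and a
conditional lower tail bound `P[Δ_t⁻ > x|F_t] ≥ c x^{-β}`. -/
theorem stmt18
    {Ω : Type*} {m0 : MeasurableSpace Ω} {μ : Measure Ω} [IsProbabilityMeasure μ]
    (F : Filtration ℕ m0) (X : ℕ → Ω → ℝ) (hadapted : Adapted F X)
    (hX0 : ∀ ω, X 0 ω = 0)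
    (α β c C x₀ : ℝ) (hα : α ∈ Set.Ioc (0:ℝ) 1) (hβ : α < β) (hc : 0 < c)
    (hposint : ∀ t, Integrable (fun ω => (max (X (t + 1) ω - X t ω) 0) ^ α) μ)
    (hpos : ∀ t, ∀ᵐ ω ∂μ,
      (μ[fun ω' => (max (X (t + 1) ω' - X t ω') 0) ^ α|F t]) ω ≤ C)
    (hneg : ∀ t, ∀ x, x₀ ≤ x → ∀ᵐ ω ∂μ,
      c * x ^ (-β) ≤ (μ[Set.indicator
        {ω' | x < max (-(X (t + 1) ω' - X t ω')) 0} (fun _ => (1:ℝ))|F t]) ω)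
    (x p : ℝ) (hp : β / α - 1 < p) :
    ∫⁻ ω, (⨆ (t : ℕ) (_ : X t ω ≤ x), (t : ℝ≥0∞)) ^ p ∂μ = ⊤ := by
  obtain ⟨hα0, hα1⟩ := hα
  have hβα1 : 1 < β / α := (one_lt_div hα0).2 hβ
  have hp0 : 0 < p := by linarith
  obtain ⟨ε, hε0, htail⟩ := core_tail F X hadapted hX0 α β c C x₀ ⟨hα0, hα1⟩ hβ hc
    hposint hpos hneg x
  set cp : ℝ := p * min 1 (2 ^ (1 - p)) with hcpdef
  have hcp0 : 0 < cp := by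
    have h1 : (0:ℝ) < 2 ^ (1-p) := Real.rpow_pos_of_pos (by norm_num) _
    have h2 : (0:ℝ) < min 1 (2^(1-p)) := lt_min one_pos h1
    rw [hcpdef]; positivity
  set v : ℕ → ℝ≥0∞ := fun k => (((k+1:ℕ) : ℝ≥0∞)) ^ p - ((k:ℕ) : ℝ≥0∞) ^ p with hvdef
  have hmeasset : ∀ k : ℕ, MeasurableSet {ω' | X (k+1) ω' ≤ x} := fun k =>
    measurableSet_le ((hadapted (k+1)).mono (F.le _) le_rfl) measurable_const
  set w : ℕ → Ω → ℝ≥0∞ := fun k => {ω' | X (k+1) ω' ≤ x}.indicator (fun _ => v k) with hwdef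
  -- pointwise bound by the telescoping sum
  have hpw : ∀ ω, ∑' k, w k ω ≤ (⨆ (t : ℕ) (_ : X t ω ≤ x), (t : ℝ≥0∞)) ^ p := by
    intro ω
    set L : ℝ≥0∞ := ⨆ (t : ℕ) (_ : X t ω ≤ x), (t : ℝ≥0∞) with hLdef
    set f : ℕ → ℝ≥0∞ := fun j => min (((j:ℕ) : ℝ≥0∞) ^ p) (L ^ p) with hfdef
    have hfmono : Monotone f := by
      intro i j hij
      exact min_le_min (ENNReal.rpow_le_rpow (by exact_mod_cast hij) hp0.le) le_rfl
    have hterm : ∀ k, w k ω ≤ f (k+1) - f k := by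
      intro k
      by_cases hk : X (k+1) ω ≤ x
      · have hL : ((k+1 : ℕ) : ℝ≥0∞) ≤ L := by
          rw [hLdef]
          exact le_iSup₂ (f := fun (t:ℕ) (_ : X t ω ≤ x) => (t : ℝ≥0∞)) (k+1) hk
        have hf1 : f (k+1) = ((k+1:ℕ) : ℝ≥0∞) ^ p := by
          rw [hfdef]; exact min_eq_left (ENNReal.rpow_le_rpow hL hp0.le)
        have hf0 : f k = ((k:ℕ) : ℝ≥0∞) ^ p := by
          rw [hfdef]
          apply min_eq_left
          apply ENNReal.rpow_le_rpow _ hp0.le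
          exact le_trans (by exact_mod_cast Nat.le_succ k) hL
        have hwk : w k ω = v k := Set.indicator_of_mem (show ω ∈ {ω' | X (k+1) ω' ≤ x} from hk) _
        rw [hwk, hf1, hf0]
      · have hwk : w k ω = 0 := Set.indicator_of_notMem (show ω ∉ {ω' | X (k+1) ω' ≤ x} from hk) _
        rw [hwk]; exact zero_le
    calc ∑' k, w k ω ≤ ∑' k, (f (k+1) - f k) := ENNReal.tsum_le_tsum hterm
      _ = ⨆ m, ∑ k ∈ Finset.range m, (f (k+1) - f k) := ENNReal.tsum_eq_iSup_nat
      _ ≤ L ^ p := by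
          apply iSup_le
          intro m
          have htel : ∀ m : ℕ, ∑ k ∈ Finset.range m, (f (k + 1) - f k) ≤ f m := by
            intro m
            induction m with
            | zero => simp
            | succ m ih =>
              rw [Finset.sum_range_succ]
              calc ∑ k ∈ Finset.range m, (f (k + 1) - f k) + (f (m+1) - f m)
                  ≤ f m + (f (m+1) - f m) := add_le_add_left ih _
                _ = f (m+1) := add_tsub_cancel_of_le (hfmono (Nat.le_succ m))
          exact le_trans (htel m) (min_le_right _ _)
  have hlin : ∫⁻ ω, ∑' k, w k ω ∂μ = ∑' k, v k * μ {ω' | X (k+1) ω' ≤ x} := by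
    rw [lintegral_tsum (fun k => ((measurable_const.indicator (hmeasset k)).aemeasurable))]
    congr 1
    funext k
    exact lintegral_indicator_const (hmeasset k) _
  have htop : ∑' k, v k * μ {ω' | X (k+1) ω' ≤ x} = ⊤ := by
    by_contra htne
    have hsumm : Summable (fun k => (v k * μ {ω' | X (k+1) ω' ≤ x}).toReal) :=
      ENNReal.summable_toReal htne
    have hlb : ∀ k : ℕ, 1 ≤ k →
        cp * ε * ((k:ℝ)+1) ^ (p - β/α) ≤ (v k * μ {ω' | X (k+1) ω' ≤ x}).toReal := by
      intro k hk
      have hk0 : (0:ℝ) < (k:ℝ) := by exact_mod_cast hk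
      have hk10 : (0:ℝ) < (k:ℝ)+1 := by linarith
      have hv : v k = ENNReal.ofReal (((k:ℝ)+1)^p - (k:ℝ)^p) := by
        show (((k+1:ℕ) : ℝ≥0∞)) ^ p - ((k:ℕ) : ℝ≥0∞) ^ p
            = ENNReal.ofReal (((k:ℝ)+1)^p - (k:ℝ)^p)
        rw [← ENNReal.ofReal_natCast (k+1), ← ENNReal.ofReal_natCast k,
          ENNReal.ofReal_rpow_of_pos (by exact_mod_cast Nat.succ_pos k),
          ENNReal.ofReal_rpow_of_pos (by exact_mod_cast hk),
          ← ENNReal.ofReal_sub _ (Real.rpow_nonneg (by positivity) _)]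
        push_cast
        ring_nf
      have hvt : (v k).toReal = ((k:ℝ)+1)^p - (k:ℝ)^p := by
        rw [hv, ENNReal.toReal_ofReal]
        have := aux_rpow_diff hp0 k hk
        nlinarith [Real.rpow_nonneg (le_of_lt hk10) (p-1), hcp0]
      have hd : cp * ((k:ℝ)+1) ^ (p-1) ≤ (v k).toReal := by
        rw [hvt]
        exact aux_rpow_diff hp0 k hk
      have hμ : ε * ((k:ℝ)+1) ^ (1 - β/α) ≤ (μ {ω' | X (k+1) ω' ≤ x}).toReal := by
        have := htail (k+1) (by omega)
        have hcast : (((k+1:ℕ)):ℝ) = (k:ℝ)+1 := by push_cast; ring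
        rwa [hcast] at this
      have hprod : (cp * ((k:ℝ)+1) ^ (p-1)) * (ε * ((k:ℝ)+1) ^ (1 - β/α))
          = cp * ε * ((k:ℝ)+1) ^ (p - β/α) := by
        rw [show p - β/α = (p-1) + (1 - β/α) by ring, Real.rpow_add hk10]
        ring
      rw [ENNReal.toReal_mul]
      calc cp * ε * ((k:ℝ)+1) ^ (p - β/α)
          = (cp * ((k:ℝ)+1) ^ (p-1)) * (ε * ((k:ℝ)+1) ^ (1 - β/α)) := hprod.symm
        _ ≤ (v k).toReal * (μ {ω' | X (k+1) ω' ≤ x}).toReal := by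
            apply mul_le_mul hd hμ (by positivity) ENNReal.toReal_nonneg
    have hsumm1 : Summable (fun k : ℕ =>
        (v (k+1) * μ {ω' | X ((k+1)+1) ω' ≤ x}).toReal) :=
      (summable_nat_add_iff
        (f := fun k => (v k * μ {ω' | X (k+1) ω' ≤ x}).toReal) 1).2 hsumm
    have hsumm2 : Summable (fun k : ℕ => cp * ε * ((k:ℝ)+2) ^ (p - β/α)) := by
      apply Summable.of_nonneg_of_le (fun k => by positivity) (fun k => ?_) hsumm1
      have h := hlb (k+1) (by omega)
      have hcast : ((k+1:ℕ):ℝ) + 1 = (k:ℝ)+2 := by push_cast; ring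
      rwa [hcast] at h
    have hsumm3 : Summable (fun k : ℕ => ((k:ℝ)+2) ^ (p - β/α)) := by
      have hne : cp * ε ≠ 0 := by positivity
      have := hsumm2.mul_left ((cp*ε)⁻¹)
      have heq : (fun k : ℕ => (cp*ε)⁻¹ * (cp * ε * ((k:ℝ)+2) ^ (p - β/α)))
          = fun k : ℕ => ((k:ℝ)+2) ^ (p - β/α) := by
        funext k
        rw [← mul_assoc, inv_mul_cancel₀ hne, one_mul]
      rwa [heq] at this
    have hsumm4 : Summable (fun k : ℕ => ((k:ℕ):ℝ) ^ (p - β/α)) := by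
      rw [← summable_nat_add_iff 2]
      have heq : (fun k : ℕ => (((k+2:ℕ)):ℝ) ^ (p - β/α))
          = fun k : ℕ => ((k:ℝ)+2) ^ (p - β/α) := by
        funext k; push_cast; ring_nf
      rwa [heq]
    rw [Real.summable_nat_rpow] at hsumm4
    linarith
  have hge : ∑' k, v k * μ {ω' | X (k+1) ω' ≤ x} ≤
      ∫⁻ ω, (⨆ (t : ℕ) (_ : X t ω ≤ x), (t : ℝ≥0∞)) ^ p ∂μ := by
    rw [← hlin]
    exact lintegral_mono hpw
  rw [htop] at hge
  exact top_le_iff.1 hge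
end

section
/- Let (X_t)_{t∈ℤ⁺} be adapted to (F_t), X_0 = 0, with increments Δ_t. Suppose there exist γ ∈ (0,1), c > 0, x₀ < ∞ such that E[Δ_t⁺ 1{Δ_t⁺ ≤ x} | F_t] ≥ c x^{1−γ} a.s. for all x ≥ x₀ and all t. Then limsup_{t→∞} |X_t| = ∞ almost surely. -/
open MeasureTheory Filter

/-- Proposition 1(ii) of the paper: if the truncated conditional means of the
positive parts of the increments satisfy
`E[Δ_t⁺ 1{Δ_t⁺ ≤ x}|F_t] ≥ c x^{1-γ}` for all large `x`, then
`limsup_{t→∞} |X_t| = ∞` almost surely. -/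
theorem stmt19
    {Ω : Type*} {m0 : MeasurableSpace Ω} {μ : Measure Ω} [IsProbabilityMeasure μ]
    (F : Filtration ℕ m0) (X : ℕ → Ω → ℝ) (hadapted : Adapted F X)
    (hX0 : ∀ ω, X 0 ω = 0)
    (γ c x₀ : ℝ) (hγ : γ ∈ Set.Ioo (0:ℝ) 1) (hc : 0 < c)
    (hpos : ∀ t, ∀ x, x₀ ≤ x → ∀ᵐ ω ∂μ,
      c * x ^ (1 - γ) ≤ (μ[fun ω' =>
        Set.indicator {ω'' | max (X (t + 1) ω'' - X t ω'') 0 ≤ x}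
          (fun ω'' => max (X (t + 1) ω'' - X t ω'') 0) ω'|F t]) ω) :
    ∀ᵐ ω ∂μ, ∀ M : ℝ, ∃ᶠ t : ℕ in atTop, M ≤ |X t ω| := by
  obtain ⟨hγ0, hγ1⟩ := hγ
  have hXm : ∀ t, Measurable (X t) := fun t =>
    ((hadapted t).mono (F.le t) le_rfl)
  have key : ∀ n : ℕ, ∀ᵐ ω ∂μ, ∃ᶠ t : ℕ in atTop, (n : ℝ) ≤ |X t ω| := by
    intro n
    set y : ℝ := 2 * n + 1 with hy
    have hy0 : (0:ℝ) < y := by positivity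
    set x : ℝ := max x₀ ((2 * y / c) ^ ((1:ℝ) / (1 - γ))) with hxdef
    have hx1 : (2 * y / c) ^ ((1:ℝ) / (1 - γ)) ≤ x := le_max_right _ _
    have hxpos : 0 < x :=
      lt_of_lt_of_le (Real.rpow_pos_of_pos (by positivity) _) hx1
    have hxx₀ : x₀ ≤ x := le_max_left _ _
    have hcx : 2 * y ≤ c * x ^ (1 - γ) := by
      have h1 : ((2 * y / c) ^ ((1:ℝ) / (1 - γ))) ^ (1 - γ) ≤ x ^ (1 - γ) :=
        Real.rpow_le_rpow (Real.rpow_nonneg (by positivity) _) hx1 (by linarith)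
      rw [← Real.rpow_mul (by positivity), one_div_mul_cancel
        (by linarith : (1:ℝ) - γ ≠ 0), Real.rpow_one] at h1
      rw [div_le_iff₀ hc] at h1
      linarith
    -- shifted filtration and events
    let ℱ : Filtration ℕ m0 :=
      ⟨fun k => F (k + 1), fun i j h => F.mono (by omega), fun k => F.le (k + 1)⟩
    set s : ℕ → Set Ω := fun k => {ω | y < X (k + 1) ω - X k ω} with hs
    have hsm : ∀ k, MeasurableSet[ℱ k] (s k) := by
      intro k
      have h1 : Measurable[F (k + 1)] (X (k + 1)) := (hadapted (k + 1))
      have h2 : Measurable[F (k + 1)] (X k) :=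
        ((hadapted k).mono (F.mono k.le_succ) le_rfl)
      exact measurableSet_lt measurable_const (h1.sub h2)
    set δ : ℝ := y / x with hδdef
    have hδ : 0 < δ := div_pos hy0 hxpos
    -- uniform per-step lower bound on conditional probabilities
    have step : ∀ k : ℕ, ∀ᵐ ω ∂μ,
        δ ≤ (μ[(s (k + 1)).indicator (1 : Ω → ℝ)|ℱ k]) ω := by
      intro k
      set Δ : Ω → ℝ := fun ω => max (X (k + 1 + 1) ω - X (k + 1) ω) 0 with hΔ
      set g : Ω → ℝ := fun ω' =>
        Set.indicator {ω'' | max (X (k + 1 + 1) ω'' - X (k + 1) ω'') 0 ≤ x}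
          (fun ω'' => max (X (k + 1 + 1) ω'' - X (k + 1) ω'') 0) ω' with hg
      have hΔm : Measurable Δ := ((hXm (k + 1 + 1)).sub (hXm (k + 1))).max measurable_const
      have hAm : MeasurableSet {ω'' | Δ ω'' ≤ x} := measurableSet_le hΔm measurable_const
      have hg_nonneg : ∀ ω, 0 ≤ g ω := fun ω =>
        Set.indicator_nonneg (fun ω' _ => le_max_right _ _) ω
      have hg_le : ∀ ω, g ω ≤ x := by
        intro ω
        by_cases h : ω ∈ {ω'' | Δ ω'' ≤ x}
        · exact (Set.indicator_of_mem h _).trans_le h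
        · exact (Set.indicator_of_notMem h _).trans_le hxpos.le
      have hg_int : Integrable g μ := by
        refine Integrable.mono' (integrable_const x)
          ((hΔm.indicator hAm).aestronglyMeasurable) (Eventually.of_forall fun ω => ?_)
        rw [Real.norm_eq_abs, abs_of_nonneg (hg_nonneg ω)]
        exact hg_le ω
      have hsm0 : MeasurableSet (s (k + 1)) := ℱ.le (k + 1) _ (hsm (k + 1))
      have hind_int : Integrable ((s (k + 1)).indicator (1 : Ω → ℝ)) μ :=
        (integrable_const (1:ℝ)).indicator hsm0
      -- pointwise bound g ≤ y + x • indicator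
      have hpt : ∀ ω, g ω ≤ (((fun _ => y) : Ω → ℝ) + x • (s (k + 1)).indicator (1 : Ω → ℝ)) ω := by
        intro ω
        have hind_nonneg : (0:ℝ) ≤ (s (k + 1)).indicator (1 : Ω → ℝ) ω :=
          Set.indicator_nonneg (fun _ _ => zero_le_one) ω
        simp only [Pi.add_apply, Pi.smul_apply, smul_eq_mul]
        by_cases h : ω ∈ {ω'' | Δ ω'' ≤ x}
        · have hgω : g ω = Δ ω := Set.indicator_of_mem h _
          by_cases h2 : ω ∈ s (k + 1)
          · rw [Set.indicator_of_mem h2, Pi.one_apply]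
            have hx : Δ ω ≤ x := h
            rw [hgω]; linarith
          · rw [Set.indicator_of_notMem h2]
            have h3 : X (k + 1 + 1) ω - X (k + 1) ω ≤ y := not_lt.1 h2
            have h4 : Δ ω ≤ y := max_le h3 hy0.le
            rw [hgω]; linarith
        · rw [show g ω = 0 from Set.indicator_of_notMem h _]
          nlinarith
      have hsum_int : Integrable (((fun _ => y) : Ω → ℝ) + x • (s (k + 1)).indicator (1 : Ω → ℝ)) μ :=
        (integrable_const y).add (hind_int.smul x)
      have hmono : μ[g|F (k + 1)] ≤ᵐ[μ]
          μ[((fun _ => y) : Ω → ℝ) + x • (s (k + 1)).indicator (1 : Ω → ℝ)|F (k + 1)] :=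
        condExp_mono hg_int hsum_int (Eventually.of_forall hpt)
      have hadd : μ[((fun _ => y) : Ω → ℝ) + x • (s (k + 1)).indicator (1 : Ω → ℝ)|F (k + 1)] =ᵐ[μ]
          μ[((fun _ => y) : Ω → ℝ)|F (k + 1)] + μ[x • (s (k + 1)).indicator (1 : Ω → ℝ)|F (k + 1)] :=
        condExp_add (integrable_const y) (hind_int.smul x) _
      have hsmul : μ[x • (s (k + 1)).indicator (1 : Ω → ℝ)|F (k + 1)] =ᵐ[μ]
          x • μ[(s (k + 1)).indicator (1 : Ω → ℝ)|F (k + 1)] :=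
        condExp_smul x _ _
      have hconst : μ[((fun _ => y) : Ω → ℝ)|F (k + 1)] = fun _ => y :=
        condExp_const (F.le (k + 1)) y
      filter_upwards [hpos (k + 1) x hxx₀, hmono, hadd, hsmul] with ω h1 h2 h3 h4
      have h1' : c * x ^ (1 - γ) ≤ (μ[g|F (k + 1)]) ω := h1
      have h5 : (μ[g|F (k + 1)]) ω ≤
          y + x * (μ[(s (k + 1)).indicator (1 : Ω → ℝ)|F (k + 1)]) ω := by
        calc (μ[g|F (k + 1)]) ω
            ≤ (μ[((fun _ => y) : Ω → ℝ) + x • (s (k + 1)).indicator (1 : Ω → ℝ)|F (k + 1)]) ω := h2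
          _ = (μ[((fun _ => y) : Ω → ℝ)|F (k + 1)]) ω
              + (μ[x • (s (k + 1)).indicator (1 : Ω → ℝ)|F (k + 1)]) ω := h3
          _ = y + x * (μ[(s (k + 1)).indicator (1 : Ω → ℝ)|F (k + 1)]) ω := by
              rw [hconst, h4]; simp [smul_eq_mul]
      have h6 : y ≤ x * (μ[(s (k + 1)).indicator (1 : Ω → ℝ)|F (k + 1)]) ω := by linarith
      show δ ≤ (μ[(s (k + 1)).indicator (1 : Ω → ℝ)|F (k + 1)]) ω
      rw [hδdef, div_le_iff₀ hxpos]
      linarith [h6]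
    have hall : ∀ᵐ ω ∂μ, ∀ k : ℕ,
        δ ≤ (μ[(s (k + 1)).indicator (1 : Ω → ℝ)|ℱ k]) ω := ae_all_iff.2 step
    filter_upwards [hall, ae_mem_limsup_atTop_iff μ hsm] with ω hω hiff
    have hmem : ω ∈ limsup s atTop := by
      refine hiff.2 ?_
      have hten : Tendsto (fun m : ℕ => (m : ℝ) * δ) atTop atTop :=
        Tendsto.atTop_mul_const hδ tendsto_natCast_atTop_atTop
      refine tendsto_atTop_mono (fun m => ?_) hten
      calc (m : ℝ) * δ = ∑ _k ∈ Finset.range m, δ := by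
            rw [Finset.sum_const, Finset.card_range, nsmul_eq_mul]
        _ ≤ ∑ k ∈ Finset.range m, (μ[(s (k + 1)).indicator (1 : Ω → ℝ)|ℱ k]) ω :=
            Finset.sum_le_sum fun k _ => hω k
    have hfreq : ∃ᶠ k in atTop, ω ∈ s k := mem_limsup_iff_frequently_mem.1 hmem
    rw [frequently_atTop] at hfreq ⊢
    intro a
    obtain ⟨k, hka, hk⟩ := hfreq a
    have hk' : y < X (k + 1) ω - X k ω := hk
    by_cases hcase : (n : ℝ) ≤ |X k ω|
    · exact ⟨k, hka, hcase⟩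
    · refine ⟨k + 1, le_trans hka (Nat.le_succ k), ?_⟩
      push_neg at hcase
      have h7 : -(n : ℝ) < X k ω := (abs_lt.1 hcase).1
      have h8 : (n : ℝ) ≤ X (k + 1) ω := by rw [hy] at hk'; linarith
      exact h8.trans (le_abs_self _)
  have := ae_all_iff.2 key
  filter_upwards [this] with ω hω M
  have h := hω ⌈M⌉₊
  exact h.mono fun t ht => le_trans (Nat.le_ceil M) ht
end
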